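/- arXiv:1908.05983 — 4 statements merged into one kernel-verified Lean document; each statement's English description precedes it below -/
import Mathlib

section
/- Let 2 ≤ s ≤ r, k ≥ 1 and n_1 ≤ n_2 ≤ ... ≤ n_r, where n_1 ≥ s³k + sr if s ≤ r−2, n_1 ≥ s³k² + sr if s = r−1, and n_1 ≥ k if s = r. Then the maximum number of edges in a subhypergraph of K^{(s)}_{n_1,...,n_r} containing no matching of size k equals (k−1) ∑_{A ⊆ [2,r], |A| = s−1} ∏_{i∈A} n_i. -/
/-- `H` (a family of finite edge sets) contains a matching of size `k`:
`k` pairwise disjoint edges. -/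
def hasMatching {α : Type*} [DecidableEq α] (H : Finset (Finset α)) (k : ℕ) : Prop :=
  ∃ M ⊆ H, M.card = k ∧ (M : Set (Finset α)).Pairwise Disjoint

/-- The edge set of the complete `r`-partite `s`-uniform hypergraph with parts
`V i = Fin (n i)`: all `s`-sets meeting each part in at most one vertex. -/
def crossEdges (r s : ℕ) (n : Fin r → ℕ) : Finset (Finset ((i : Fin r) × Fin (n i))) :=
  Finset.univ.filter fun S =>
    S.card = s ∧ ∀ i : Fin r, (S.filter fun v => v.1 = i).card ≤ 1

/-- `T` is a copy of `K_r^{(s)}` in the `s`-graph `H`: it is a transversal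
(one vertex in each part) all of whose `s`-subsets are edges of `H`. -/
def isKrCopy (r s : ℕ) (n : Fin r → ℕ) (H : Finset (Finset ((i : Fin r) × Fin (n i))))
    (T : Finset ((i : Fin r) × Fin (n i))) : Prop :=
  (∀ i : Fin r, (T.filter fun v => v.1 = i).card = 1) ∧ ∀ S ∈ T.powersetCard s, S ∈ H

/-- `H` contains `k` pairwise vertex-disjoint copies of `K_r^{(s)}`. -/
def hasKDisjointKr (r s k : ℕ) (n : Fin r → ℕ)
    (H : Finset (Finset ((i : Fin r) × Fin (n i)))) : Prop :=
  ∃ C : Finset (Finset ((i : Fin r) × Fin (n i))), C.card = k ∧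
    (∀ T ∈ C, isKrCopy r s n H T) ∧
    (C : Set (Finset ((i : Fin r) × Fin (n i)))).Pairwise Disjoint

/-- The number of `s`-cliques of the graph with edge set `H`
(an `s`-clique is an `s`-set all of whose `2`-subsets are edges). -/
def cliqueCount (r s : ℕ) (n : Fin r → ℕ)
    (H : Finset (Finset ((i : Fin r) × Fin (n i)))) : ℕ :=
  (Finset.univ.filter fun S : Finset ((i : Fin r) × Fin (n i)) =>
    S.card = s ∧ ∀ e ∈ S.powersetCard 2, e ∈ H).card

open Finset

section Aux

variable {r : ℕ} {n : Fin r → ℕ}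

/-- abbreviation for the vertex type -/
abbrev Vtx (r : ℕ) (n : Fin r → ℕ) := (i : Fin r) × Fin (n i)

/-- the non-first parts -/
def Vparts (r : ℕ) : Finset (Fin r) := Finset.univ.filter fun i => 0 < i.val

/-- the basic counting quantity: number of partial transversals of size `j`
avoiding part `0`, counted as a sum of products. -/
def Bsum (r : ℕ) (n : Fin r → ℕ) (j : ℕ) : ℕ :=
  ∑ A ∈ (Vparts r).powersetCard j, ∏ i ∈ A, n i

/-- sets with at most one vertex per part, exactly `u` vertices, within parts `Q` -/
def partialTrans (r : ℕ) (n : Fin r → ℕ) (Q : Finset (Fin r)) (u : ℕ) :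
    Finset (Finset (Vtx r n)) :=
  Finset.univ.filter fun U =>
    U.card = u ∧ (∀ i : Fin r, (U.filter fun v => v.1 = i).card ≤ 1) ∧ ∀ x ∈ U, x.1 ∈ Q

lemma card_Vparts : (Vparts r).card = r - 1 := by
  rcases Nat.eq_zero_or_pos r with h | h
  · subst h
    simp [Vparts]
  · have : Vparts r = Finset.univ.erase ⟨0, h⟩ := by
      ext i
      simp only [Vparts, mem_filter, mem_erase, mem_univ, true_and, and_true]
      constructor
      · intro hi he
        subst he; simp at hi
      · intro hi
        have : i.val ≠ 0 := fun hv => hi (Fin.ext hv)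
        omega
    rw [this, card_erase_of_mem (mem_univ _)]
    simp


lemma parts_ne_of_partcard {S : Finset (Vtx r n)}
    (hS : ∀ i : Fin r, (S.filter fun v => v.1 = i).card ≤ 1)
    {x y : Vtx r n} (hx : x ∈ S) (hy : y ∈ S) (hne : x ≠ y) : x.1 ≠ y.1 := by
  intro h
  apply hne
  exact Finset.card_le_one.mp (hS x.1) x (mem_filter.mpr ⟨hx, rfl⟩)
    y (mem_filter.mpr ⟨hy, h.symm⟩)

lemma sigma_cast_eq {i i' : Fin r} (h : i' = i) (v : Fin (n i')) :
    (⟨i, Fin.cast (congrArg n h) v⟩ : Vtx r n) = ⟨i', v⟩ := by subst h; rfl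

/-- select the vertex of `U` in part `i` -/
noncomputable def partSelV (U : Finset (Vtx r n)) (i : Fin r)
    (h : (U.filter fun v => v.1 = i).Nonempty) : Vtx r n := h.choose

lemma partSelV_mem (U : Finset (Vtx r n)) (i : Fin r)
    (h : (U.filter fun v => v.1 = i).Nonempty) : partSelV U i h ∈ U :=
  (mem_filter.mp h.choose_spec).1

lemma partSelV_fst (U : Finset (Vtx r n)) (i : Fin r)
    (h : (U.filter fun v => v.1 = i).Nonempty) : (partSelV U i h).1 = i :=
  (mem_filter.mp h.choose_spec).2

lemma partSelV_eq (U : Finset (Vtx r n)) (i : Fin r)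
    (h : (U.filter fun v => v.1 = i).Nonempty)
    (hcard : (U.filter fun v => v.1 = i).card ≤ 1)
    {x : Vtx r n} (hx : x ∈ U) (hxi : x.1 = i) : x = partSelV U i h :=
  Finset.card_le_one.mp hcard x (mem_filter.mpr ⟨hx, hxi⟩)
    _ (mem_filter.mpr ⟨partSelV_mem U i h, partSelV_fst U i h⟩)

/-- select the `Fin (n i)`-value of the vertex of `U` in part `i` -/
noncomputable def partSelF (U : Finset (Vtx r n)) (i : Fin r)
    (h : (U.filter fun v => v.1 = i).Nonempty) : Fin (n i) :=
  Fin.cast (congrArg n (partSelV_fst U i h)) (partSelV U i h).2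

lemma partSelF_pair (U : Finset (Vtx r n)) (i : Fin r)
    (h : (U.filter fun v => v.1 = i).Nonempty) :
    (⟨i, partSelF U i h⟩ : Vtx r n) = partSelV U i h :=
  sigma_cast_eq (partSelV_fst U i h) _

lemma partSelF_mem (U : Finset (Vtx r n)) (i : Fin r)
    (h : (U.filter fun v => v.1 = i).Nonempty) :
    (⟨i, partSelF U i h⟩ : Vtx r n) ∈ U := by
  rw [partSelF_pair]; exact partSelV_mem U i h

lemma sum_powersetCard_le (hmono : Monotone n) (Q Q' : Finset (Fin r)) (φ : Fin r → Fin r)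
    (hmap : ∀ i ∈ Q, φ i ∈ Q') (hinj : Set.InjOn φ Q) (hn : ∀ i ∈ Q, n i ≤ n (φ i)) (u : ℕ) :
    ∑ A ∈ Q.powersetCard u, ∏ i ∈ A, n i ≤ ∑ A ∈ Q'.powersetCard u, ∏ i ∈ A, n i := by
  have step1 : ∑ A ∈ Q.powersetCard u, ∏ i ∈ A, n i
      ≤ ∑ A ∈ Q.powersetCard u, ∏ i ∈ A, n (φ i) := by
    apply Finset.sum_le_sum
    intro A hA
    have hAQ : A ⊆ Q := (mem_powersetCard.mp hA).1
    exact Finset.prod_le_prod' fun i hi => hn i (hAQ hi)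
  have step2 : ∀ A ∈ Q.powersetCard u, ∏ i ∈ A, n (φ i) = ∏ i ∈ A.image φ, n i := by
    intro A hA
    have hAQ : A ⊆ Q := (mem_powersetCard.mp hA).1
    rw [Finset.prod_image]
    intro a ha b hb hab
    exact hinj (hAQ ha) (hAQ hb) hab
  have step3 : ∑ A ∈ Q.powersetCard u, ∏ i ∈ A.image φ, n i
      = ∑ B ∈ (Q.powersetCard u).image (fun A => A.image φ), ∏ i ∈ B, n i := by
    rw [Finset.sum_image]
    intro A hA B hB hAB
    have hAQ : A ⊆ Q := (mem_powersetCard.mp hA).1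
    have hBQ : B ⊆ Q := (mem_powersetCard.mp hB).1
    apply Finset.Subset.antisymm
    · intro x hx
      have : φ x ∈ B.image φ := by simp only at hAB; rw [← hAB]; exact mem_image_of_mem _ hx
      obtain ⟨y, hy, hxy⟩ := mem_image.mp this
      rwa [hinj (hBQ hy) (hAQ hx) hxy] at hy
    · intro x hx
      have : φ x ∈ A.image φ := by simp only at hAB; rw [hAB]; exact mem_image_of_mem _ hx
      obtain ⟨y, hy, hxy⟩ := mem_image.mp this
      rwa [hinj (hAQ hy) (hBQ hx) hxy] at hy
  have step4 : (Q.powersetCard u).image (fun A => A.image φ) ⊆ Q'.powersetCard u := by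
    intro B hB
    obtain ⟨A, hA, rfl⟩ := mem_image.mp hB
    obtain ⟨hAQ, hAcard⟩ := mem_powersetCard.mp hA
    rw [mem_powersetCard]
    constructor
    · intro x hx
      obtain ⟨y, hy, rfl⟩ := mem_image.mp hx
      exact hmap y (hAQ hy)
    · rw [Finset.card_image_of_injOn (fun a ha b hb hab => hinj (hAQ ha) (hAQ hb) hab), hAcard]
  calc ∑ A ∈ Q.powersetCard u, ∏ i ∈ A, n i
      ≤ ∑ A ∈ Q.powersetCard u, ∏ i ∈ A, n (φ i) := step1
    _ = ∑ A ∈ Q.powersetCard u, ∏ i ∈ A.image φ, n i := Finset.sum_congr rfl step2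
    _ = ∑ B ∈ (Q.powersetCard u).image (fun A => A.image φ), ∏ i ∈ B, n i := step3
    _ ≤ ∑ A ∈ Q'.powersetCard u, ∏ i ∈ A, n i := Finset.sum_le_sum_of_subset step4

lemma count_partialTrans (Q : Finset (Fin r)) (u : ℕ) :
    (partialTrans r n Q u).card = ∑ A ∈ Q.powersetCard u, ∏ i ∈ A, n i := by
  classical
  have hmem : ∀ U ∈ partialTrans r n Q u,
      (fun (U : Finset (Vtx r n)) => U.image Sigma.fst) U ∈ Q.powersetCard u := by
    intro U hU
    simp only [partialTrans, mem_filter, mem_univ, true_and] at hU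
    obtain ⟨hcard, hpc, hQ⟩ := hU
    rw [mem_powersetCard]
    refine ⟨?_, ?_⟩
    · intro i hi
      obtain ⟨x, hx, rfl⟩ := mem_image.mp hi
      exact hQ x hx
    · rw [Finset.card_image_of_injOn, hcard]
      intro x hx y hy hxy
      by_contra hne
      exact parts_ne_of_partcard hpc hx hy hne hxy
  rw [Finset.card_eq_sum_card_fiberwise hmem]
  apply Finset.sum_congr rfl
  intro A hA
  obtain ⟨hAQ, hAcard⟩ := mem_powersetCard.mp hA
  have hpi : (A.pi fun i => (Finset.univ : Finset (Fin (n i)))).card = ∏ i ∈ A, n i := by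
    rw [Finset.card_pi]
    exact Finset.prod_congr rfl fun i _ => by simp
  rw [← hpi]
  refine Finset.card_bij'
    (fun U hU => fun a (ha : a ∈ A) => partSelF U a (by
      simp only [mem_filter] at hU
      rw [← hU.2] at ha
      obtain ⟨x, hx, hxa⟩ := mem_image.mp ha
      exact ⟨x, mem_filter.mpr ⟨hx, hxa⟩⟩))
    (fun f hf => A.attach.image fun a => (⟨a.1, f a.1 a.2⟩ : Vtx r n))
    ?_ ?_ ?_ ?_
  · -- hi : forward lands in pi
    intro U hU
    simp only [Finset.mem_pi]
    intro a ha
    exact mem_univ _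
  · -- hj : backward lands in fiber
    intro f hf
    set U' := A.attach.image fun a => (⟨a.1, f a.1 a.2⟩ : Vtx r n) with hU'def
    have hinj : ∀ x ∈ A.attach, ∀ y ∈ A.attach,
        (⟨x.1, f x.1 x.2⟩ : Vtx r n) = ⟨y.1, f y.1 y.2⟩ → x = y := by
      intro x _ y _ hxy
      exact Subtype.ext (congrArg Sigma.fst hxy)
    have hmemU' : ∀ x ∈ U', x.1 ∈ A := by
      intro x hx
      obtain ⟨a, _, rfl⟩ := mem_image.mp hx
      exact a.2
    rw [mem_filter]
    constructor
    · simp only [partialTrans, mem_filter, mem_univ, true_and]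
      refine ⟨?_, ?_, fun x hx => hAQ (hmemU' x hx)⟩
      · rw [card_image_of_injOn hinj, card_attach, hAcard]
      · intro i
        rw [Finset.card_le_one]
        intro x hx y hy
        rw [mem_filter] at hx hy
        obtain ⟨hx1, hx2⟩ := hx
        obtain ⟨hy1, hy2⟩ := hy
        obtain ⟨a, _, rfl⟩ := mem_image.mp hx1
        obtain ⟨b, _, rfl⟩ := mem_image.mp hy1
        have : a = b := Subtype.ext (by simp only at hx2 hy2; rw [hx2, hy2])
        subst this; rfl
    · apply Finset.Subset.antisymm
      · intro i hi
        obtain ⟨x, hx, rfl⟩ := mem_image.mp hi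
        exact hmemU' x hx
      · intro i hi
        apply mem_image.mpr
        exact ⟨⟨i, f i hi⟩, mem_image.mpr ⟨⟨i, hi⟩, mem_attach _ _, rfl⟩, rfl⟩
  · -- left inverse
    intro U hU
    have hU' := hU
    simp only [mem_filter, partialTrans, mem_univ, true_and] at hU'
    obtain ⟨⟨hcard, hpc, hQ⟩, himg⟩ := hU'
    ext x
    constructor
    · intro hx
      obtain ⟨a, _, rfl⟩ := mem_image.mp hx
      exact partSelF_mem U a.1 _
    · intro hx
      have hxA : x.1 ∈ A := by rw [← himg]; exact mem_image_of_mem _ hx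
      apply mem_image.mpr
      refine ⟨⟨x.1, hxA⟩, mem_attach _ _, ?_⟩
      have hne : (U.filter fun v => v.1 = x.1).Nonempty :=
        ⟨x, mem_filter.mpr ⟨hx, rfl⟩⟩
      have hx' := partSelV_eq U x.1 hne (hpc x.1) hx rfl
      rw [partSelF_pair, ← hx']
  · -- right inverse
    intro f hf
    funext a ha
    have hne : ((A.attach.image fun a => (⟨a.1, f a.1 a.2⟩ : Vtx r n)).filter
        fun v => v.1 = a).Nonempty := by
      refine ⟨⟨a, f a ha⟩, mem_filter.mpr ⟨mem_image.mpr ⟨⟨a, ha⟩, mem_attach _ _, rfl⟩, rfl⟩⟩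
    have hle : ((A.attach.image fun a => (⟨a.1, f a.1 a.2⟩ : Vtx r n)).filter
        fun v => v.1 = a).card ≤ 1 := by
      rw [Finset.card_le_one]
      intro x hx y hy
      rw [mem_filter] at hx hy
      obtain ⟨hx1, hx2⟩ := hx
      obtain ⟨hy1, hy2⟩ := hy
      obtain ⟨b, _, rfl⟩ := mem_image.mp hx1
      obtain ⟨c, _, rfl⟩ := mem_image.mp hy1
      have : b = c := Subtype.ext (by simp only at hx2 hy2; rw [hx2, hy2])
      subst this; rfl
    have hmem' : (⟨a, f a ha⟩ : Vtx r n) ∈ A.attach.image fun a => (⟨a.1, f a.1 a.2⟩ : Vtx r n) :=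
      mem_image.mpr ⟨⟨a, ha⟩, mem_attach _ _, rfl⟩
    have heq := partSelV_eq _ a hne hle hmem' rfl
    rw [← partSelF_pair _ a hne] at heq
    have h2 := (Sigma.mk.inj_iff.mp heq).2
    exact (eq_of_heq h2).symm

end Aux

section CrossBasic

variable {r s : ℕ} {n : Fin r → ℕ}

lemma edge_card {S : Finset (Vtx r n)} (hS : S ∈ crossEdges r s n) : S.card = s := by
  simp only [crossEdges, mem_filter] at hS; exact hS.2.1

lemma edge_partcard {S : Finset (Vtx r n)} (hS : S ∈ crossEdges r s n) (i : Fin r) :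
    (S.filter fun v => v.1 = i).card ≤ 1 := by
  simp only [crossEdges, mem_filter] at hS; exact hS.2.2 i

lemma edge_parts_ne {S : Finset (Vtx r n)} (hS : S ∈ crossEdges r s n)
    {x y : Vtx r n} (hx : x ∈ S) (hy : y ∈ S) (hne : x ≠ y) : x.1 ≠ y.1 :=
  parts_ne_of_partcard (fun i => edge_partcard hS i) hx hy hne

/-- counting edges containing a fixed partial transversal `T` -/
lemma count_superset (hmono : Monotone n) (hr : 2 ≤ r) (T : Finset (Vtx r n)) (hne : T.Nonempty)
    (hT : ∀ x ∈ T, ∀ y ∈ T, x ≠ y → x.1 ≠ y.1) (j : ℕ) (hj : T.card = j) :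
    ((crossEdges r s n).filter fun S => T ⊆ S).card ≤ Bsum r n (s - j) := by
  classical
  have hr0 : 0 < r := by omega
  set Q : Finset (Fin r) := Finset.univ \ T.image Sigma.fst with hQdef
  have step1 : ((crossEdges r s n).filter fun S => T ⊆ S).card
      ≤ (partialTrans r n Q (s - j)).card := by
    apply Finset.card_le_card_of_injOn (fun S => S \ T)
    · intro S hS
      rw [mem_coe, mem_filter] at hS
      obtain ⟨hSE, hTS⟩ := hS
      simp only [mem_coe, partialTrans, mem_filter, mem_univ, true_and]
      refine ⟨?_, ?_, ?_⟩
      · rw [card_sdiff_of_subset hTS, edge_card hSE, hj]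
      · intro i
        exact le_trans (Finset.card_le_card
          (Finset.filter_subset_filter _ (Finset.sdiff_subset))) (edge_partcard hSE i)
      · intro x hx
        rw [mem_sdiff] at hx
        obtain ⟨hxS, hxT⟩ := hx
        rw [hQdef, mem_sdiff]
        refine ⟨mem_univ _, ?_⟩
        intro hmem
        obtain ⟨y, hyT, hyx⟩ := mem_image.mp hmem
        have hne' : y ≠ x := fun h => hxT (h ▸ hyT)
        exact edge_parts_ne hSE (hTS hyT) hxS hne' hyx
    · intro S₁ h₁ S₂ h₂ heq
      simp only [Finset.coe_filter, Set.mem_setOf_eq] at h₁ h₂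
      have heq' : S₁ \ T = S₂ \ T := heq
      rw [← Finset.sdiff_union_of_subset h₁.2, ← Finset.sdiff_union_of_subset h₂.2, heq']
  rw [count_partialTrans] at step1
  apply le_trans step1
  unfold Bsum
  by_cases h0 : (⟨0, hr0⟩ : Fin r) ∈ T.image Sigma.fst
  · apply sum_powersetCard_le hmono Q (Vparts r) id
    · intro i hi
      rw [hQdef, mem_sdiff] at hi
      simp only [Vparts, mem_filter, mem_univ, true_and, id]
      by_contra hc
      push_neg at hc
      have hiv : i.val = 0 := by omega
      have : i = ⟨0, hr0⟩ := Fin.ext hiv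
      exact hi.2 (this ▸ h0)
    · exact Set.injOn_id _
    · intro i _; exact le_refl _
  · obtain ⟨x₀, hx₀⟩ := hne
    set p₀ := (x₀.1 : Fin r) with hp₀def
    have hp₀img : p₀ ∈ T.image Sigma.fst := mem_image_of_mem _ hx₀
    have hp₀ne : p₀ ≠ ⟨0, hr0⟩ := fun h => h0 (h ▸ hp₀img)
    apply sum_powersetCard_le hmono Q (Vparts r) (fun i => if i = ⟨0, hr0⟩ then p₀ else i)
    · intro i hi
      rw [hQdef, mem_sdiff] at hi
      simp only [Vparts, mem_filter, mem_univ, true_and]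
      by_cases hc : i = ⟨0, hr0⟩
      · rw [if_pos hc]
        have : p₀.val ≠ 0 := fun h => hp₀ne (Fin.ext h)
        omega
      · rw [if_neg hc]
        have : i.val ≠ 0 := fun h => hc (Fin.ext h)
        omega
    · intro a ha b hb hab
      have hab' : (if a = ⟨0, hr0⟩ then p₀ else a) = (if b = ⟨0, hr0⟩ then p₀ else b) := hab
      rw [hQdef, Finset.coe_sdiff, Set.mem_diff] at ha hb
      simp only [coe_image, Set.mem_image, coe_univ, Set.mem_univ, true_and] at ha hb
      by_cases hca : a = ⟨0, hr0⟩ <;> by_cases hcb : b = ⟨0, hr0⟩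
      · rw [hca, hcb]
      · rw [if_pos hca, if_neg hcb] at hab'
        exfalso
        apply hb
        exact ⟨x₀, hx₀, hab'⟩
      · rw [if_neg hca, if_pos hcb] at hab'
        exfalso
        apply ha
        exact ⟨x₀, hx₀, hab'.symm⟩
      · rwa [if_neg hca, if_neg hcb] at hab'
    · intro i _
      by_cases hc : i = ⟨0, hr0⟩
      · rw [if_pos hc, hc]
        apply hmono
        simp [Fin.le_def]
      · rw [if_neg hc]

/-- the degree bound -/
lemma count_vertex (hmono : Monotone n) (hr : 2 ≤ r) (v : Vtx r n) :
    ((crossEdges r s n).filter fun S => v ∈ S).card ≤ Bsum r n (s - 1) := by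
  have : ((crossEdges r s n).filter fun S => v ∈ S)
      = ((crossEdges r s n).filter fun S => {v} ⊆ S) := by
    apply Finset.filter_congr
    intro S _
    simp [Finset.singleton_subset_iff]
  rw [this]
  apply count_superset hmono hr {v} (singleton_nonempty v) _ 1 (card_singleton v)
  intro x hx y hy hxy
  rw [mem_singleton] at hx hy
  exact absurd (hx.trans hy.symm) hxy

/-- the pair-degree bound -/
lemma count_pair (hmono : Monotone n) (hr : 2 ≤ r) (v w : Vtx r n) (hvw : v ≠ w) :
    ((crossEdges r s n).filter fun S => v ∈ S ∧ w ∈ S).card ≤ Bsum r n (s - 2) := by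
  by_cases hp : v.1 = w.1
  · have : ((crossEdges r s n).filter fun S => v ∈ S ∧ w ∈ S) = ∅ := by
      rw [Finset.filter_eq_empty_iff]
      intro S hS ⟨hv, hw⟩
      exact edge_parts_ne hS hv hw hvw hp
    rw [this]
    simp
  · have heq : ((crossEdges r s n).filter fun S => v ∈ S ∧ w ∈ S)
        = ((crossEdges r s n).filter fun S => ({v, w} : Finset (Vtx r n)) ⊆ S) := by
      apply Finset.filter_congr
      intro S _
      simp [Finset.insert_subset_iff]
    rw [heq]
    apply count_superset hmono hr {v, w} (insert_nonempty _ _) _ 2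
    · rw [card_insert_of_notMem (by simp [hvw]), card_singleton]
    · intro x hx y hy hxy
      simp only [mem_insert, mem_singleton] at hx hy
      rcases hx with rfl | rfl <;> rcases hy with rfl | rfl
      · exact absurd rfl hxy
      · exact hp
      · exact fun h => hp h.symm
      · exact absurd rfl hxy

/-- the key double counting: `(s-1) * B (s-1) ≥ (r-s+1) * n 0 * B (s-2)` -/
lemma key_ineq (hmono : Monotone n) (hs : 2 ≤ s) (hsr : s ≤ r) (hr0 : 0 < r) :
    (r - s + 1) * (n ⟨0, hr0⟩ * Bsum r n (s - 2)) ≤ (s - 1) * Bsum r n (s - 1) := by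
  classical
  have hVcard : (Vparts r).card = r - 1 := card_Vparts
  have key : ∑ x ∈ ((Vparts r).powersetCard (s-2)).sigma (fun A => Vparts r \ A),
        (∏ l ∈ insert x.2 x.1, n l)
      = ∑ x ∈ ((Vparts r).powersetCard (s-1)).sigma (fun B => B), (∏ l ∈ x.1, n l) := by
    apply Finset.sum_nbij' (fun x => (⟨insert x.2 x.1, x.2⟩ : Σ _ : Finset (Fin r), Fin r))
      (fun y => (⟨y.1.erase y.2, y.2⟩ : Σ _ : Finset (Fin r), Fin r))
    · rintro ⟨A, j⟩ hx
      rw [mem_sigma] at hx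
      obtain ⟨hA, hj⟩ := hx
      rw [mem_powersetCard] at hA
      rw [mem_sdiff] at hj
      rw [mem_sigma, mem_powersetCard]
      refine ⟨⟨?_, ?_⟩, mem_insert_self _ _⟩
      · exact insert_subset hj.1 hA.1
      · rw [card_insert_of_notMem hj.2, hA.2]
        omega
    · rintro ⟨B, i⟩ hy
      rw [mem_sigma] at hy
      obtain ⟨hB, hi⟩ := hy
      rw [mem_powersetCard] at hB
      rw [mem_sigma, mem_powersetCard, mem_sdiff]
      refine ⟨⟨?_, ?_⟩, hB.1 hi, notMem_erase _ _⟩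
      · exact (erase_subset _ _).trans hB.1
      · rw [card_erase_of_mem hi, hB.2]
        omega
    · rintro ⟨A, j⟩ hx
      rw [mem_sigma, mem_sdiff] at hx
      rw [Sigma.mk.inj_iff]
      exact ⟨by rw [erase_insert hx.2.2], HEq.rfl⟩
    · rintro ⟨B, i⟩ hy
      rw [mem_sigma] at hy
      rw [Sigma.mk.inj_iff]
      exact ⟨by rw [insert_erase hy.2], HEq.rfl⟩
    · rintro ⟨A, j⟩ _
      rfl
  have lhs_eval : ∑ x ∈ ((Vparts r).powersetCard (s-2)).sigma (fun A => Vparts r \ A),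
        (∏ l ∈ insert x.2 x.1, n l)
      ≥ (r - s + 1) * (n ⟨0, hr0⟩ * Bsum r n (s - 2)) := by
    rw [Finset.sum_sigma]
    have : ∀ A ∈ (Vparts r).powersetCard (s-2),
        (r - s + 1) * (n ⟨0, hr0⟩ * ∏ l ∈ A, n l)
          ≤ ∑ j ∈ Vparts r \ A, ∏ l ∈ insert j A, n l := by
      intro A hA
      rw [mem_powersetCard] at hA
      have hcA : (Vparts r \ A).card = r - 1 - (s - 2) := by
        rw [card_sdiff_of_subset hA.1, hVcard, hA.2]
      have : ∀ j ∈ Vparts r \ A, n ⟨0, hr0⟩ * ∏ l ∈ A, n l ≤ ∏ l ∈ insert j A, n l := by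
        intro j hj
        rw [mem_sdiff] at hj
        rw [Finset.prod_insert hj.2]
        apply Nat.mul_le_mul_right
        apply hmono
        simp [Fin.le_def]
      calc (r - s + 1) * (n ⟨0, hr0⟩ * ∏ l ∈ A, n l)
          ≤ (Vparts r \ A).card * (n ⟨0, hr0⟩ * ∏ l ∈ A, n l) := by
            apply Nat.mul_le_mul_right
            omega
        _ ≤ ∑ j ∈ Vparts r \ A, ∏ l ∈ insert j A, n l := by
            rw [← Finset.sum_const_nat (m := n ⟨0, hr0⟩ * ∏ l ∈ A, n l) (fun x _ => rfl)]
            exact Finset.sum_le_sum this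
    calc (r - s + 1) * (n ⟨0, hr0⟩ * Bsum r n (s - 2))
        = ∑ A ∈ (Vparts r).powersetCard (s-2), (r - s + 1) * (n ⟨0, hr0⟩ * ∏ l ∈ A, n l) := by
          rw [Bsum, Finset.mul_sum, Finset.mul_sum]
      _ ≤ ∑ A ∈ (Vparts r).powersetCard (s-2), ∑ j ∈ Vparts r \ A, ∏ l ∈ insert j A, n l :=
          Finset.sum_le_sum this
  have rhs_eval : ∑ x ∈ ((Vparts r).powersetCard (s-1)).sigma (fun B => B), (∏ l ∈ x.1, n l)
      = (s - 1) * Bsum r n (s - 1) := by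
    rw [Finset.sum_sigma]
    rw [Bsum, Finset.mul_sum]
    apply Finset.sum_congr rfl
    intro B hB
    rw [mem_powersetCard] at hB
    rw [Finset.sum_const_nat (m := ∏ l ∈ B, n l) (fun x _ => rfl)]
    rw [hB.2]
  omega

/-- exact count of the star at a part-0 vertex -/
lemma count_star (hr0 : 0 < r) (hs : 1 ≤ s) (x : Fin (n ⟨0, hr0⟩)) :
    ((crossEdges r s n).filter fun S => (⟨⟨0, hr0⟩, x⟩ : Vtx r n) ∈ S).card
      = Bsum r n (s - 1) := by
  classical
  set x₀ : Vtx r n := ⟨⟨0, hr0⟩, x⟩ with hx₀def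
  have : Bsum r n (s-1) = (partialTrans r n (Vparts r) (s-1)).card := by
    rw [count_partialTrans]; rfl
  rw [this]
  apply Finset.card_nbij' (fun S => S.erase x₀) (fun U => insert x₀ U)
  · intro S hS
    rw [mem_coe, mem_filter] at hS
    obtain ⟨hSE, hxS⟩ := hS
    simp only [mem_coe, partialTrans, mem_filter, mem_univ, true_and]
    refine ⟨?_, ?_, ?_⟩
    · rw [card_erase_of_mem hxS, edge_card hSE]
    · intro i
      exact le_trans (Finset.card_le_card
        (Finset.filter_subset_filter _ (Finset.erase_subset _ _))) (edge_partcard hSE i)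
    · intro y hy
      have hyS : y ∈ S := mem_of_mem_erase hy
      have hyne : y ≠ x₀ := ne_of_mem_erase hy
      have := edge_parts_ne hSE hyS hxS hyne
      simp only [Vparts, mem_filter, mem_univ, true_and]
      have : y.1.val ≠ 0 := by
        intro h
        exact this (by rw [hx₀def]; exact Fin.ext h)
      omega
  · intro U hU
    simp only [mem_coe, partialTrans, mem_filter, mem_univ, true_and] at hU
    obtain ⟨hcard, hpc, hQ⟩ := hU
    have hx₀U : x₀ ∉ U := by
      intro h
      have := hQ x₀ h
      simp only [Vparts, mem_filter, mem_univ, true_and, hx₀def] at this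
      omega
    rw [mem_coe, mem_filter]
    constructor
    · simp only [crossEdges, mem_filter, mem_univ, true_and]
      constructor
      · rw [card_insert_of_notMem hx₀U, hcard]
        omega
      · intro i
        rw [Finset.card_le_one]
        intro a ha b hb
        rw [mem_filter, mem_insert] at ha hb
        obtain ⟨ha1, ha2⟩ := ha
        obtain ⟨hb1, hb2⟩ := hb
        rcases ha1 with rfl | ha1 <;> rcases hb1 with rfl | hb1
        · rfl
        · exfalso
          have hbv := hQ b hb1
          simp only [Vparts, mem_filter, mem_univ, true_and] at hbv
          have hfst : b.fst = x₀.fst := hb2.trans ha2.symm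
          rw [hfst, hx₀def] at hbv
          simp at hbv
        · exfalso
          have hav := hQ a ha1
          simp only [Vparts, mem_filter, mem_univ, true_and] at hav
          have hfst : a.fst = x₀.fst := ha2.trans hb2.symm
          rw [hfst, hx₀def] at hav
          simp at hav
        · exact Finset.card_le_one.mp (hpc i) a (mem_filter.mpr ⟨ha1, ha2⟩)
            b (mem_filter.mpr ⟨hb1, hb2⟩)
    · exact mem_insert_self _ _
  · intro S hS
    rw [mem_coe, mem_filter] at hS
    exact insert_erase hS.2
  · intro U hU
    simp only [mem_coe, partialTrans, mem_filter, mem_univ, true_and] at hU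
    apply erase_insert
    intro h
    have := hU.2.2 x₀ h
    simp [Vparts, hx₀def] at this

end CrossBasic

section Lower

variable {r s k : ℕ} {n : Fin r → ℕ}

lemma lower_bound (hmono : Monotone n) (hs : 2 ≤ s) (hsr : s ≤ r) (hk : 1 ≤ k)
    (hr0 : 0 < r) (hn0 : k ≤ n ⟨0, hr0⟩) :
    ∃ H ⊆ crossEdges r s n, ¬ hasMatching H k ∧ H.card = (k - 1) * Bsum r n (s - 1) := by
  classical
  set p0 : Fin r := ⟨0, hr0⟩ with hp0def
  set H := (crossEdges r s n).filter
    (fun S => ∃ x ∈ S, x.1 = p0 ∧ x.2.val < k - 1) with hHdef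
  refine ⟨H, filter_subset _ _, ?_, ?_⟩
  · -- no matching of size k
    rintro ⟨M, hMH, hMcard, hMdisj⟩
    have hwit : ∀ f ∈ M, ∃ x ∈ f, x.1 = p0 ∧ x.2.val < k - 1 := by
      intro f hf
      have := hMH hf
      rw [hHdef, mem_filter] at this
      exact this.2
    set TF := (Finset.univ : Finset (Vtx r n)).filter
      (fun x => x.1 = p0 ∧ x.2.val < k - 1) with hTFdef
    have hTFcard : TF.card ≤ k - 1 := by
      rw [← Finset.card_range (k-1)]
      apply Finset.card_le_card_of_injOn (fun x => x.2.val) (s := TF) (t := Finset.range (k-1))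
      · intro x hx
        rw [hTFdef, mem_coe, mem_filter] at hx
        rw [mem_coe, mem_range]
        exact hx.2.2
      · intro x hx y hy hxy
        rw [hTFdef, Finset.coe_filter, Set.mem_setOf_eq] at hx hy
        obtain ⟨x1, x2⟩ := x
        obtain ⟨y1, y2⟩ := y
        have hx1 : x1 = p0 := hx.2.1
        have hy1 : y1 = p0 := hy.2.1
        subst hx1
        subst hy1
        simp only at hxy
        congr 1
        exact Fin.ext hxy
    have junk : Vtx r n := ⟨p0, ⟨0, by omega⟩⟩
    set witF : Finset (Vtx r n) → Vtx r n := fun f =>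
      if h : ∃ x ∈ f, x.1 = p0 ∧ x.2.val < k - 1 then h.choose else junk with hwitFdef
    have hMle : M.card ≤ TF.card := by
      apply Finset.card_le_card_of_injOn witF
      · intro f hf
        have h := hwit f hf
        have hwf : witF f = h.choose := dif_pos h
        rw [hwf]
        obtain ⟨hmem, hprop⟩ := h.choose_spec
        rw [hTFdef, mem_coe, mem_filter]
        exact ⟨mem_univ _, hprop⟩
      · intro f hf g hg hfg
        by_contra hne
        have hdisj := hMdisj hf hg hne
        have hf' := hwit f hf
        have hg' := hwit g hg
        have hwf : witF f = hf'.choose := dif_pos hf'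
        have hwg : witF g = hg'.choose := dif_pos hg'
        rw [hwf, hwg] at hfg
        have hmf : hf'.choose ∈ f := hf'.choose_spec.1
        have hmg : hg'.choose ∈ g := hg'.choose_spec.1
        rw [hfg] at hmf
        exact (Finset.disjoint_left.mp hdisj hmf) hmg
    omega
  · -- cardinality
    set ψ : Finset (Vtx r n) → ℕ := fun S =>
      if h : (S.filter (fun v => v.1 = p0)).Nonempty then (partSelV S p0 h).2.val else 0
      with hψdef
    have hψmem : ∀ S ∈ H, ψ S ∈ Finset.range (k - 1) := by
      intro S hS
      rw [hHdef, mem_filter] at hS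
      obtain ⟨hSE, x, hxS, hx1, hx2⟩ := hS
      have hne : (S.filter (fun v => v.1 = p0)).Nonempty := ⟨x, mem_filter.mpr ⟨hxS, hx1⟩⟩
      have hxeq := partSelV_eq S p0 hne (edge_partcard hSE p0) hxS hx1
      rw [hψdef]
      simp only [dif_pos hne]
      rw [← hxeq, mem_range]
      exact hx2
    rw [Finset.card_eq_sum_card_fiberwise hψmem]
    have hfib : ∀ j ∈ Finset.range (k - 1),
        (H.filter fun S => ψ S = j).card = Bsum r n (s - 1) := by
      intro j hj
      rw [mem_range] at hj
      have hjn : j < n p0 := by omega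
      set xj : Vtx r n := ⟨p0, ⟨j, hjn⟩⟩ with hxjdef
      have : (H.filter fun S => ψ S = j) = ((crossEdges r s n).filter fun S => xj ∈ S) := by
        ext S
        simp only [hHdef, mem_filter]
        constructor
        · rintro ⟨⟨hSE, x, hxS, hx1, hx2⟩, hψS⟩
          refine ⟨hSE, ?_⟩
          have hne : (S.filter (fun v => v.1 = p0)).Nonempty := ⟨x, mem_filter.mpr ⟨hxS, hx1⟩⟩
          rw [hψdef] at hψS
          simp only [dif_pos hne] at hψS
          have hv : (⟨p0, partSelF S p0 hne⟩ : Vtx r n) ∈ S := partSelF_mem S p0 hne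
          have : (partSelF S p0 hne).val = j := by
            rw [partSelF]
            exact hψS
          have hxj : (⟨p0, partSelF S p0 hne⟩ : Vtx r n) = xj := by
            rw [hxjdef]
            congr 1
            exact Fin.ext this
          rwa [hxj] at hv
        · rintro ⟨hSE, hxjS⟩
          have hne : (S.filter (fun v => v.1 = p0)).Nonempty :=
            ⟨xj, mem_filter.mpr ⟨hxjS, rfl⟩⟩
          have hxeq := partSelV_eq S p0 hne (edge_partcard hSE p0) hxjS rfl
          refine ⟨⟨hSE, xj, hxjS, rfl, by rw [hxjdef]; exact hj⟩, ?_⟩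
          rw [hψdef]
          simp only [dif_pos hne]
          rw [← hxeq]
      rw [this]
      exact count_star hr0 (by omega) ⟨j, hjn⟩
    rw [Finset.sum_congr rfl hfib, Finset.sum_const, card_range, smul_eq_mul]

end Lower

section UpperEq

variable {r s k : ℕ} {n : Fin r → ℕ}

lemma mod_inj1 {N a b d : ℕ} (ha : a < N) (hb : b < N)
    (h : (a + d) % N = (b + d) % N) : a = b := by
  have h1 : (a + d) ≡ (b + d) [MOD N] := h
  have h2 : a ≡ b [MOD N] := Nat.ModEq.add_right_cancel' d h1
  calc a = a % N := (Nat.mod_eq_of_lt ha).symm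
    _ = b % N := h2
    _ = b := Nat.mod_eq_of_lt hb

lemma mod_inj2 {N a b y : ℕ} (ha : a < N) (hb : b < N)
    (h : (y + (N - a)) % N = (y + (N - b)) % N) : a = b := by
  have h1 : (y + (N - a)) ≡ (y + (N - b)) [MOD N] := h
  have h2 := h1.add_right (a + b)
  have e1 : y + (N - a) + (a + b) = (y + N) + b := by omega
  have e2 : y + (N - b) + (a + b) = (y + N) + a := by omega
  rw [e1, e2] at h2
  have h3 : b ≡ a [MOD N] := Nat.ModEq.add_left_cancel' (y + N) h2
  calc a = a % N := (Nat.mod_eq_of_lt ha).symm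
    _ = b % N := h3.symm
    _ = b := Nat.mod_eq_of_lt hb

/-- the fiber argument for `s = r` -/
lemma upper_eq (hmono : Monotone n) (hs : 2 ≤ s) (hk : 1 ≤ k) (hr0 : 0 < r)
    (hn0 : 0 < n ⟨0, hr0⟩)
    (H : Finset (Finset (Vtx r n))) (hH : H ⊆ crossEdges r r n) (hno : ¬ hasMatching H k) :
    H.card ≤ (k - 1) * Bsum r n (r - 1) := by
  classical
  set p0 : Fin r := ⟨0, hr0⟩ with hp0def
  have hpos : ∀ i : Fin r, 0 < n i := fun i =>
    lt_of_lt_of_le hn0 (hmono (show (⟨0, hr0⟩ : Fin r) ≤ i by simp [Fin.le_def]))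
  -- each edge has exactly one vertex in each part
  have hone : ∀ S ∈ crossEdges r r n, ∀ i : Fin r, (S.filter fun v => v.1 = i).card = 1 := by
    intro S hS i
    have himg : (S.image Sigma.fst).card = r := by
      rw [Finset.card_image_of_injOn, edge_card hS]
      intro x hx y hy hxy
      by_contra hne
      exact parts_ne_of_partcard (fun j => edge_partcard hS j) hx hy hne hxy
    have huniv : S.image Sigma.fst = Finset.univ :=
      Finset.eq_univ_of_card _ (by rw [himg, Fintype.card_fin])
    have hiimg : i ∈ S.image Sigma.fst := huniv ▸ mem_univ i
    obtain ⟨x, hx, hxi⟩ := mem_image.mp hiimg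
    have h1 : 1 ≤ (S.filter fun v => v.1 = i).card := by
      rw [Nat.one_le_iff_ne_zero, ← Nat.pos_iff_ne_zero, Finset.card_pos]
      exact ⟨x, mem_filter.mpr ⟨hx, hxi⟩⟩
    exact Nat.le_antisymm (edge_partcard hS i) h1
  have hfilne : ∀ S ∈ crossEdges r r n, ∀ i : Fin r,
      (S.filter fun v => v.1 = i).Nonempty := by
    intro S hS i
    rw [← Finset.card_pos, hone S hS i]
    omega
  -- the offset of an edge
  set cval : Finset (Vtx r n) → ℕ := fun S =>
    if h : (S.filter fun v => v.1 = p0).Nonempty then (partSelF S p0 h).val else 0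
    with hcvaldef
  have hcval_eq : ∀ (S : Finset (Vtx r n)) (h : (S.filter fun v => v.1 = p0).Nonempty),
      cval S = (partSelF S p0 h).val := fun S h => dif_pos h
  have hcval_lt : ∀ S ∈ crossEdges r r n, ∀ i : Fin r, cval S < n i := by
    intro S hS i
    rw [hcval_eq S (hfilne S hS p0)]
    exact lt_of_lt_of_le (Fin.is_lt _) (hmono (show (⟨0, hr0⟩ : Fin r) ≤ i by simp [Fin.le_def]))
  -- the label of an edge
  set lab : Finset (Vtx r n) → ((i : Fin r) → i ∈ Vparts r → Fin (n i)) := fun S i _ =>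
    if h : (S.filter fun v => v.1 = i).Nonempty then
      ⟨((partSelF S i h).val + (n i - cval S)) % n i, Nat.mod_lt _ (hpos i)⟩
    else ⟨0, hpos i⟩
    with hlabdef
  have hlab_eq : ∀ (S : Finset (Vtx r n)) (i : Fin r) (hi : i ∈ Vparts r)
      (h : (S.filter fun v => v.1 = i).Nonempty),
      (lab S i hi).val = ((partSelF S i h).val + (n i - cval S)) % n i := by
    intro S i hi h
    rw [hlabdef]
    simp only [dif_pos h]
  -- a vertex of S in part i is the selected one
  have hsel : ∀ S ∈ crossEdges r r n, ∀ i : Fin r, ∀ y : Fin (n i),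
      (⟨i, y⟩ : Vtx r n) ∈ S → ∀ h : (S.filter fun v => v.1 = i).Nonempty,
      partSelF S i h = y := by
    intro S hS i y hy h
    have h1 := partSelV_eq S i h (edge_partcard hS i) hy rfl
    rw [← partSelF_pair S i h] at h1
    exact (eq_of_heq (Sigma.mk.inj_iff.mp h1).2).symm
  -- edges with equal labels and equal offsets coincide
  have hsub : ∀ U ∈ H, ∀ V ∈ H, lab U = lab V → cval U = cval V → U ⊆ V := by
    intro U hU V hV hl hc w hwU
    obtain ⟨i, y⟩ := w
    have hUE := hH hU
    have hVE := hH hV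
    have hneV := hfilne V hVE i
    have hneU : (U.filter fun v => v.1 = i).Nonempty := ⟨⟨i, y⟩, mem_filter.mpr ⟨hwU, rfl⟩⟩
    have hyU : partSelF U i hneU = y := hsel U hUE i y hwU hneU
    by_cases hip : i = p0
    · subst hip
      have h1 := hcval_eq U hneU
      have h2 := hcval_eq V hneV
      have h3 : partSelF V p0 hneV = y := by
        apply Fin.ext
        rw [← h2, ← hc, h1, hyU]
      rw [← h3]
      exact partSelF_mem V p0 hneV
    · have hiV : i ∈ Vparts r := by
        simp only [Vparts, mem_filter, mem_univ, true_and]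
        have : i.val ≠ 0 := by
          intro h0
          exact hip (Fin.ext h0)
        omega
      have hl' : lab U i hiV = lab V i hiV := by rw [hl]
      have hl'' := congrArg Fin.val hl'
      rw [hlab_eq U i hiV hneU, hlab_eq V i hiV hneV, hc] at hl''
      have hVy : partSelF V i hneV = y := by
        apply Fin.ext
        have := mod_inj1 (Fin.is_lt _) (Fin.is_lt _) hl''
        rw [← this, hyU]
      rw [← hVy]
      exact partSelF_mem V i hneV
  -- edges with equal labels are equal or disjoint
  have hdisj : ∀ S ∈ H, ∀ T ∈ H, lab S = lab T → S ≠ T → Disjoint S T := by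
    intro S hS T hT hlab hne
    have hSE := hH hS
    have hTE := hH hT
    have hcne : cval S ≠ cval T := by
      intro hceq
      exact hne (Finset.Subset.antisymm (hsub S hS T hT hlab hceq)
        (hsub T hT S hS hlab.symm hceq.symm))
    rw [Finset.disjoint_left]
    intro v hvS hvT
    obtain ⟨i, y⟩ := v
    have hneS : (S.filter fun w => w.1 = i).Nonempty := ⟨⟨i, y⟩, mem_filter.mpr ⟨hvS, rfl⟩⟩
    have hneT : (T.filter fun w => w.1 = i).Nonempty := ⟨⟨i, y⟩, mem_filter.mpr ⟨hvT, rfl⟩⟩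
    have hyS : partSelF S i hneS = y := hsel S hSE i y hvS hneS
    have hyT : partSelF T i hneT = y := hsel T hTE i y hvT hneT
    by_cases hip : i = p0
    · subst hip
      apply hcne
      rw [hcval_eq S hneS, hcval_eq T hneT, hyS, hyT]
    · have hiV : i ∈ Vparts r := by
        simp only [Vparts, mem_filter, mem_univ, true_and]
        have : i.val ≠ 0 := fun h0 => hip (Fin.ext h0)
        omega
      have hl' : lab S i hiV = lab T i hiV := by rw [hlab]
      have hl'' := congrArg Fin.val hl'
      rw [hlab_eq S i hiV hneS, hlab_eq T i hiV hneT, hyS, hyT] at hl''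
      exact hcne (mod_inj2 (hcval_lt S hSE i) (hcval_lt T hTE i) hl'')
  -- count fiberwise
  have hmem : ∀ S ∈ H, lab S ∈ (Vparts r).pi (fun i => (Finset.univ : Finset (Fin (n i)))) := by
    intro S _
    rw [Finset.mem_pi]
    intro a _
    exact mem_univ _
  rw [Finset.card_eq_sum_card_fiberwise hmem]
  have hfib : ∀ g ∈ (Vparts r).pi (fun i => (Finset.univ : Finset (Fin (n i)))),
      (H.filter fun S => lab S = g).card ≤ k - 1 := by
    intro g _
    by_contra hcon
    push_neg at hcon
    have hkle : k ≤ (H.filter fun S => lab S = g).card := by omega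
    obtain ⟨M, hM, hMcard⟩ := Finset.exists_subset_card_eq hkle
    apply hno
    refine ⟨M, ?_, hMcard, ?_⟩
    · exact hM.trans (filter_subset _ _)
    · intro a ha b hb hab
      have ha' := hM ha
      have hb' := hM hb
      rw [mem_coe] at ha hb
      rw [mem_filter] at ha' hb'
      exact hdisj a ha'.1 b hb'.1 (ha'.2.trans hb'.2.symm) hab
  calc ∑ g ∈ (Vparts r).pi (fun i => (Finset.univ : Finset (Fin (n i)))),
        (H.filter fun S => lab S = g).card
      ≤ ∑ _g ∈ (Vparts r).pi (fun i => (Finset.univ : Finset (Fin (n i)))), (k-1) :=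
        Finset.sum_le_sum hfib
    _ = ((Vparts r).pi (fun i => (Finset.univ : Finset (Fin (n i))))).card * (k-1) := by
        rw [Finset.sum_const, smul_eq_mul]
    _ = (k - 1) * Bsum r n (r - 1) := by
        rw [Finset.card_pi]
        have : Bsum r n (r-1) = ∏ i ∈ Vparts r, n i := by
          rw [Bsum, ← card_Vparts, Finset.powersetCard_self, Finset.sum_singleton]
        rw [this, Nat.mul_comm]
        congr 1
        apply Finset.prod_congr rfl
        intro i _
        simp

end UpperEq

section UpperLt

variable {r s k : ℕ} {n : Fin r → ℕ}

lemma arith_main {s k m : ℕ} (hs : 2 ≤ s) (hm : m + 1 ≤ k) :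
    (s-1) * ((m+1)*(s-1)^2 + s*(m*s-1)) ≤ 2 * (s^3 * k) := by
  have hd : s - 1 ≤ s := Nat.sub_le _ _
  have h1 : (s-1) * ((m+1)*(s-1)^2) ≤ s^3 * k := by
    have he : (s-1) * ((m+1)*(s-1)^2) = (m+1) * ((s-1)^3) := by ring
    rw [he]
    calc (m+1) * (s-1)^3 ≤ k * s^3 := Nat.mul_le_mul hm (Nat.pow_le_pow_left hd 3)
    _ = s^3 * k := Nat.mul_comm _ _
  have h2 : (s-1) * (s*(m*s-1)) ≤ s^3 * k := by
    calc (s-1) * (s*(m*s-1)) ≤ s * (s*(m*s)) :=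
          Nat.mul_le_mul hd (Nat.mul_le_mul_left _ (Nat.sub_le _ _))
    _ = m * s^3 := by ring
    _ ≤ k * s^3 := Nat.mul_le_mul_right _ (by omega)
    _ = s^3 * k := Nat.mul_comm _ _
  calc (s-1) * ((m+1)*(s-1)^2 + s*(m*s-1))
      = (s-1)*((m+1)*(s-1)^2) + (s-1)*(s*(m*s-1)) := Nat.mul_add _ _ _
  _ ≤ s^3*k + s^3*k := Nat.add_le_add h1 h2
  _ = 2*(s^3*k) := by ring

/-- the main upper bound argument for `s < r` -/
lemma upper_lt (hmono : Monotone n) (hs : 2 ≤ s) (hsr : s < r) (hk : 1 ≤ k)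
    (hbig : 2 * s^3 * k ≤ (r - s + 1) * n ⟨0, by omega⟩)
    (H : Finset (Finset (Vtx r n))) (hH : H ⊆ crossEdges r s n) (hno : ¬ hasMatching H k) :
    H.card ≤ (k - 1) * Bsum r n (s - 1) := by
  classical
  have hr0 : 0 < r := by omega
  have hr2 : 2 ≤ r := by omega
  set p0 : Fin r := ⟨0, hr0⟩ with hp0def
  have hbig' : 2 * (s^3 * k) ≤ (r - s + 1) * n p0 := by
    have h := hbig
    have he : 2 * s^3 * k = 2 * (s^3*k) := by ring
    rw [he] at h
    exact h
  have hn0pos : 0 < n p0 := by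
    rcases Nat.eq_zero_or_pos (n p0) with h0 | h0
    · exfalso
      rw [h0, Nat.mul_zero] at hbig'
      have hs3 : 0 < s^3 := by positivity
      have : 0 < 2 * (s^3 * k) := by
        apply Nat.mul_pos (by omega)
        exact Nat.mul_pos hs3 hk
      omega
    · exact h0
  set junk : Vtx r n := ⟨p0, ⟨0, hn0pos⟩⟩ with hjunkdef
  -- maximum matching
  set MS : Finset (Finset (Finset (Vtx r n))) :=
    H.powerset.filter (fun M => (M : Set (Finset (Vtx r n))).Pairwise Disjoint) with hMSdef
  have hMSne : MS.Nonempty := ⟨∅, by simp [hMSdef]⟩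
  obtain ⟨M₀, hM₀MS, hM₀max⟩ := Finset.exists_max_image MS Finset.card hMSne
  have hM₀H : M₀ ⊆ H := mem_powerset.mp (mem_filter.mp hM₀MS).1
  have hM₀disj : (M₀ : Set (Finset (Vtx r n))).Pairwise Disjoint := (mem_filter.mp hM₀MS).2
  set m := M₀.card with hmdef
  have hmax : ∀ M' ∈ MS, M'.card ≤ m := hM₀max
  have hedgecard : ∀ f ∈ H, f.card = s := fun f hf => edge_card (hH hf)
  have hmk : m ≤ k - 1 := by
    by_contra hcon
    push_neg at hcon
    obtain ⟨M, hM, hMcard⟩ := Finset.exists_subset_card_eq (show k ≤ m by omega)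
    exact hno ⟨M, hM.trans hM₀H, hMcard, hM₀disj.mono (Finset.coe_subset.mpr hM)⟩
  set W : Finset (Vtx r n) := M₀.biUnion id with hWdef
  have heW : ∀ e ∈ M₀, e ⊆ W := fun e he => subset_biUnion_of_mem id he
  have hWcard : W.card ≤ m * s := by
    calc W.card ≤ ∑ e ∈ M₀, (id e).card := card_biUnion_le
    _ = ∑ _e ∈ M₀, s := by
        apply Finset.sum_congr rfl
        intro e he
        exact hedgecard e (hM₀H he)
    _ = m * s := by rw [Finset.sum_const, smul_eq_mul]
  set P : Vtx r n → Finset (Finset (Vtx r n)) :=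
    fun v => H.filter (fun g => g ∩ W = {v}) with hPdef
  set t := m * (s-1) + 1 with htdef
  set Rich : Vtx r n → Prop := fun v => ∃ TT ⊆ P v, TT.card = t ∧
      (∀ f ∈ TT, ∀ f' ∈ TT, f ≠ f' → f ∩ f' ⊆ {v}) with hRichdef
  letI instRE : DecidablePred (fun e : Finset (Vtx r n) => ∃ v ∈ e, Rich v) :=
    fun e => Classical.propDecidable _
  set Mr := M₀.filter (fun e => ∃ v ∈ e, Rich v) with hMrdef
  set Mp := M₀.filter (fun e => ¬ ∃ v ∈ e, Rich v) with hMpdef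
  have hMrM₀ : Mr ⊆ M₀ := filter_subset _ _
  have hMpM₀ : Mp ⊆ M₀ := filter_subset _ _
  set wit : Finset (Vtx r n) → Vtx r n :=
    fun e => if h : ∃ v ∈ e, Rich v then h.choose else junk with hwitdef
  have hwit : ∀ e ∈ Mr, wit e ∈ e ∧ Rich (wit e) := by
    intro e he
    have h := (mem_filter.mp he).2
    have hwe : wit e = h.choose := dif_pos h
    rw [hwe]
    exact ⟨h.choose_spec.1, h.choose_spec.2⟩
  -- the key covering property (by the augmenting argument)
  have hcover : ∀ g ∈ H, (∃ e ∈ Mr, wit e ∈ g) ∨ (∃ e ∈ Mp, (g ∩ e).Nonempty) := by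
    intro g hg
    by_contra hcon
    push_neg at hcon
    obtain ⟨hA, hB⟩ := hcon
    set Eg := M₀.filter (fun e => (g ∩ e).Nonempty) with hEgdef
    have hEgM₀ : Eg ⊆ M₀ := filter_subset _ _
    have hEgMr : ∀ e ∈ Eg, e ∈ Mr := by
      intro e he
      rw [hEgdef, mem_filter] at he
      by_contra hcon2
      have heMp : e ∈ Mp := by
        rw [hMpdef, mem_filter]
        refine ⟨he.1, ?_⟩
        intro hex
        apply hcon2
        rw [hMrdef, mem_filter]
        exact ⟨he.1, hex⟩
      exact (Finset.nonempty_iff_ne_empty.mp he.2) (hB e heMp)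
    have hgcard : g.card = s := hedgecard g hg
    by_cases hEgne : Eg = ∅
    · -- the matching can be extended by g itself
      have hgM₀ : g ∉ M₀ := by
        intro hgM
        have hmem : g ∈ Eg := by
          rw [hEgdef, mem_filter]
          refine ⟨hgM, ?_⟩
          rw [Finset.inter_self, ← Finset.card_pos, hgcard]
          omega
        rw [hEgne] at hmem
        exact notMem_empty _ hmem
      have hdisjall : ∀ e ∈ M₀, Disjoint g e := by
        intro e he
        have hnot : e ∉ Eg := by rw [hEgne]; exact notMem_empty _
        rw [hEgdef, mem_filter] at hnot
        push_neg at hnot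
        have h2 := hnot he
        exact Finset.disjoint_iff_inter_eq_empty.mpr h2
      have hM' : insert g M₀ ∈ MS := by
        rw [hMSdef, mem_filter, mem_powerset]
        constructor
        · exact insert_subset hg hM₀H
        · intro a ha b hb hne
          rw [mem_coe, mem_insert] at ha hb
          rcases ha with rfl | ha <;> rcases hb with rfl | hb
          · exact absurd rfl hne
          · exact hdisjall b hb
          · exact (hdisjall a ha).symm
          · exact hM₀disj (mem_coe.mpr ha) (mem_coe.mpr hb) hne
      have hcontr := hmax _ hM'
      rw [card_insert_of_notMem hgM₀] at hcontr
      omega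
    · -- Eg nonempty : augment along rich edges
      have hgW1 : (g ∩ W).Nonempty := by
        obtain ⟨e, he⟩ := Finset.nonempty_iff_ne_empty.mpr hEgne
        obtain ⟨x, hx⟩ := (mem_filter.mp he).2
        rw [mem_inter] at hx
        exact ⟨x, mem_inter.mpr ⟨hx.1, heW e (hEgM₀ he) hx.2⟩⟩
      have hgsdW : (g \ W).card ≤ s - 1 := by
        have h1 : 0 < (g ∩ W).card := Finset.card_pos.mpr hgW1
        have h2 := Finset.card_sdiff_add_card_inter g W
        omega
      -- greedily pick pairwise compatible private edges for the met matching edges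
      have greedy : ∀ (R : Finset (Finset (Vtx r n))), R ⊆ Eg →
          (g \ W).card + R.card * (s-1) ≤ (m+1) * (s-1) →
          ∃ CH : Finset (Finset (Vtx r n)), CH ⊆ H ∧ CH.card = R.card ∧
            (∀ f ∈ CH, ∃ e ∈ R, f ∩ W = {wit e}) ∧
            (∀ f ∈ CH, ∀ f' ∈ CH, f ≠ f' → f ∩ f' ⊆ W) ∧
            (∀ f ∈ CH, ∀ f' ∈ CH, f ≠ f' → f ∩ W ≠ f' ∩ W) ∧
            (∀ f ∈ CH, f ∩ (g \ W) = ∅) := by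
        intro R
        induction R using Finset.induction_on with
        | empty =>
          intro _ _
          refine ⟨∅, ?_, ?_, ?_, ?_, ?_, ?_⟩ <;> simp
        | @insert e R he ih =>
          intro hsub hbud
          have hRsub : R ⊆ Eg := fun x hx => hsub (mem_insert_of_mem hx)
          have hexp : (R.card + 1) * (s-1) = R.card * (s-1) + (s-1) := by ring
          have hbud' : (g \ W).card + R.card * (s-1) ≤ (m+1)*(s-1) := by
            rw [card_insert_of_notMem he] at hbud
            omega
          obtain ⟨CH, hCHH, hCHcard, hCHwit, hCHpair, hCHinj, hCHg⟩ := ih hRsub hbud'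
          set BL := (g \ W) ∪ (CH.biUnion (fun f => f \ W)) with hBLdef
          have hBLW : ∀ x ∈ BL, x ∉ W := by
            intro x hx
            rw [hBLdef, mem_union] at hx
            rcases hx with hx | hx
            · exact (mem_sdiff.mp hx).2
            · obtain ⟨f, hf, hxf⟩ := mem_biUnion.mp hx
              exact (mem_sdiff.mp hxf).2
          have hCHtail : ∀ f ∈ CH, (f \ W).card = s - 1 := by
            intro f hf
            obtain ⟨e', _, hfW⟩ := hCHwit f hf
            have hfH : f ∈ H := hCHH hf
            have hsum := Finset.card_sdiff_add_card_inter f W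
            rw [hfW, card_singleton, hedgecard f hfH] at hsum
            omega
          have hBLcard : BL.card ≤ m * (s-1) := by
            have hstep : ∑ f ∈ CH, (f \ W).card = CH.card * (s-1) := by
              rw [Finset.sum_congr rfl hCHtail, Finset.sum_const, smul_eq_mul]
            have hbl1 : BL.card ≤ (g \ W).card + (CH.biUnion (fun f => f \ W)).card :=
              card_union_le _ _
            have hbl2 : (CH.biUnion (fun f => f \ W)).card ≤ ∑ f ∈ CH, (f \ W).card :=
              card_biUnion_le
            rw [card_insert_of_notMem he] at hbud
            rw [hstep, hCHcard] at hbl2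
            have hy : (m+1) * (s-1) = m * (s-1) + (s-1) := by ring
            omega
          have heEg : e ∈ Eg := hsub (mem_insert_self e R)
          have heMr : e ∈ Mr := hEgMr e heEg
          obtain ⟨hwite, hrich⟩ := hwit e heMr
          obtain ⟨TT, hTTP, hTTcard, hTTpair⟩ := hrich
          have hfind : ∃ f₀ ∈ TT, f₀ ∩ BL = ∅ := by
            by_contra hcon2
            push_neg at hcon2
            set pick : Finset (Vtx r n) → Vtx r n := fun f =>
              if h : (f ∩ BL).Nonempty then h.choose else junk with hpickdef
            have hle : TT.card ≤ BL.card := by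
              apply Finset.card_le_card_of_injOn pick
              · intro f hf
                have hne2 : (f ∩ BL).Nonempty :=
                  hcon2 f hf
                have hp : pick f = hne2.choose := dif_pos hne2
                rw [hp]
                exact (mem_inter.mp hne2.choose_spec).2
              · intro f hf f' hf' hpp
                by_contra hne2
                have hne3 : (f ∩ BL).Nonempty :=
                  hcon2 f hf
                have hne4 : (f' ∩ BL).Nonempty :=
                  hcon2 f' hf'
                have hp3 : pick f = hne3.choose := dif_pos hne3
                have hp4 : pick f' = hne4.choose := dif_pos hne4
                have hx3 := hne3.choose_spec
                have hx4 := hne4.choose_spec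
                rw [mem_inter] at hx3 hx4
                have hxx : hne3.choose = hne4.choose := by rw [← hp3, ← hp4, hpp]
                have hinter : hne3.choose ∈ f ∩ f' :=
                  mem_inter.mpr ⟨hx3.1, hxx ▸ hx4.1⟩
                have hxw := hTTpair f hf f' hf' hne2 hinter
                rw [mem_singleton] at hxw
                have hWmem : hne3.choose ∈ W := by
                  rw [hxw]
                  exact heW e (hEgM₀ heEg) hwite
                exact hBLW _ hx3.2 hWmem
            rw [hTTcard, htdef] at hle
            omega
          obtain ⟨f₀, hf₀TT, hf₀BL⟩ := hfind
          have hf₀P : f₀ ∈ P (wit e) := hTTP hf₀TT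
          have hf₀H : f₀ ∈ H := (mem_filter.mp hf₀P).1
          have hf₀W : f₀ ∩ W = {wit e} := (mem_filter.mp hf₀P).2
          have hwitne : ∀ e' ∈ R, wit e' ≠ wit e := by
            intro e' he' hww
            have he'Mr : e' ∈ Mr := hEgMr e' (hRsub he')
            have h1 := (hwit e' he'Mr).1
            rw [hww] at h1
            have hee' : e ≠ e' := by
              intro hh
              rw [← hh] at he'
              exact he he'
            exact (Finset.disjoint_left.mp (hM₀disj (mem_coe.mpr (hMrM₀ heMr))
              (mem_coe.mpr (hMrM₀ he'Mr)) hee') hwite) h1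
          have hf₀CH : f₀ ∉ CH := by
            intro hmem
            obtain ⟨e', he', hfW'⟩ := hCHwit f₀ hmem
            rw [hf₀W, Finset.singleton_inj] at hfW'
            exact hwitne e' he' hfW'.symm
          have hnewold : ∀ f ∈ CH, f₀ ∩ f ⊆ W := by
            intro f hf x hx
            rw [mem_inter] at hx
            by_contra hxW
            have hxBL : x ∈ BL := by
              rw [hBLdef, mem_union]
              exact Or.inr (mem_biUnion.mpr ⟨f, hf, mem_sdiff.mpr ⟨hx.2, hxW⟩⟩)
            have hxa : x ∈ f₀ ∩ BL := mem_inter.mpr ⟨hx.1, hxBL⟩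
            rw [hf₀BL] at hxa
            exact notMem_empty _ hxa
          refine ⟨insert f₀ CH, ?_, ?_, ?_, ?_, ?_, ?_⟩
          · intro f hf
            rcases mem_insert.mp hf with rfl | hf
            · exact hf₀H
            · exact hCHH hf
          · rw [card_insert_of_notMem hf₀CH, card_insert_of_notMem he, hCHcard]
          · intro f hf
            rcases mem_insert.mp hf with rfl | hf
            · exact ⟨e, mem_insert_self e R, hf₀W⟩
            · obtain ⟨e', he', hh⟩ := hCHwit f hf
              exact ⟨e', mem_insert_of_mem he', hh⟩
          · intro f hf f' hf' hne
            rcases mem_insert.mp hf with hfe | hfC <;> rcases mem_insert.mp hf' with hfe' | hfC'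
            · exact absurd (hfe.trans hfe'.symm) hne
            · rw [hfe]
              exact hnewold f' hfC'
            · rw [hfe']
              intro x hx
              rw [mem_inter] at hx
              exact hnewold f hfC (mem_inter.mpr ⟨hx.2, hx.1⟩)
            · exact hCHpair f hfC f' hfC' hne
          · intro f hf f' hf' hne
            rcases mem_insert.mp hf with hfe | hfC <;> rcases mem_insert.mp hf' with hfe' | hfC'
            · exact absurd (hfe.trans hfe'.symm) hne
            · obtain ⟨e', he', hh⟩ := hCHwit f' hfC'
              rw [hfe, hf₀W, hh, Ne, Finset.singleton_inj]
              intro hww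
              exact hwitne e' he' hww.symm
            · obtain ⟨e', he', hh⟩ := hCHwit f hfC
              rw [hfe', hf₀W, hh, Ne, Finset.singleton_inj]
              intro hww
              exact hwitne e' he' hww
            · exact hCHinj f hfC f' hfC' hne
          · intro f hf
            rcases mem_insert.mp hf with rfl | hf
            · rw [← Finset.subset_empty, ← hf₀BL]
              intro x hx
              rw [mem_inter] at hx
              refine mem_inter.mpr ⟨hx.1, ?_⟩
              rw [hBLdef, mem_union]
              exact Or.inl hx.2
            · exact hCHg f hf
      have hEgcard : Eg.card ≤ m := card_le_card hEgM₀
      have hbud0 : (g \ W).card + Eg.card * (s-1) ≤ (m+1) * (s-1) := by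
        have h1 : Eg.card * (s-1) ≤ m * (s-1) := Nat.mul_le_mul_right _ hEgcard
        have hy : (m+1)*(s-1) = m*(s-1) + (s-1) := by ring
        omega
      obtain ⟨CH, hCHH, hCHcard, hCHwit, hCHpair, hCHinj, hCHg⟩ :=
        greedy Eg (Finset.Subset.refl Eg) hbud0
      -- assemble the augmented matching
      have hCHdisjM : Disjoint (M₀ \ Eg) CH := by
        rw [Finset.disjoint_left]
        intro f hfM hfCH
        obtain ⟨e', _, hfW⟩ := hCHwit f hfCH
        have hfsub : f ⊆ W := heW f (mem_sdiff.mp hfM).1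
        have heq : f ∩ W = f := Finset.inter_eq_left.mpr hfsub
        rw [hfW] at heq
        have hcardeq := congrArg Finset.card heq
        rw [card_singleton, hedgecard f (hM₀H (mem_sdiff.mp hfM).1)] at hcardeq
        omega
      have hgM : g ∉ (M₀ \ Eg) ∪ CH := by
        intro hmem
        rcases mem_union.mp hmem with hmem | hmem
        · rw [mem_sdiff] at hmem
          apply hmem.2
          rw [hEgdef, mem_filter]
          refine ⟨hmem.1, ?_⟩
          rw [Finset.inter_self, ← Finset.card_pos, hgcard]
          omega
        · obtain ⟨e', he', hfW⟩ := hCHwit g hmem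
          have : wit e' ∈ g ∩ W := by rw [hfW]; exact mem_singleton_self _
          exact hA e' (hEgMr e' he') (mem_inter.mp this).1
      set M' := insert g ((M₀ \ Eg) ∪ CH) with hM'def
      have hM'card : M'.card = m + 1 := by
        rw [hM'def, card_insert_of_notMem hgM, card_union_of_disjoint hCHdisjM,
          card_sdiff_of_subset hEgM₀, hCHcard]
        have : Eg.card ≤ m := hEgcard
        omega
      -- disjointness pieces
      have hdCHM : ∀ f ∈ CH, ∀ a ∈ M₀ \ Eg, Disjoint f a := by
        intro f hf a ha
        rw [Finset.disjoint_left]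
        intro x hxf hxa
        obtain ⟨e', he', hfW⟩ := hCHwit f hf
        have hxW : x ∈ W := heW a (mem_sdiff.mp ha).1 hxa
        have hxx : x ∈ f ∩ W := mem_inter.mpr ⟨hxf, hxW⟩
        rw [hfW, mem_singleton] at hxx
        subst hxx
        have h1 := (hwit e' (hEgMr e' he')).1
        have hne : e' ≠ a := by
          intro hh
          rw [hh] at he'
          exact (mem_sdiff.mp ha).2 he'
        exact (Finset.disjoint_left.mp (hM₀disj (mem_coe.mpr (hEgM₀ he'))
          (mem_coe.mpr (mem_sdiff.mp ha).1) hne) h1) hxa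
      have hdCHCH : ∀ f ∈ CH, ∀ f' ∈ CH, f ≠ f' → Disjoint f f' := by
        intro f hf f' hf' hne
        rw [Finset.disjoint_left]
        intro x hxf hxf'
        have hxW : x ∈ W := by
          have := hCHpair f hf f' hf' hne (mem_inter.mpr ⟨hxf, hxf'⟩)
          exact this
        obtain ⟨e1, he1, hfW1⟩ := hCHwit f hf
        obtain ⟨e2, he2, hfW2⟩ := hCHwit f' hf'
        have hx1 : x ∈ f ∩ W := mem_inter.mpr ⟨hxf, hxW⟩
        have hx2 : x ∈ f' ∩ W := mem_inter.mpr ⟨hxf', hxW⟩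
        rw [hfW1, mem_singleton] at hx1
        rw [hfW2, mem_singleton] at hx2
        apply hCHinj f hf f' hf' hne
        rw [hfW1, hfW2, ← hx1, ← hx2]
      have hdgM : ∀ a ∈ M₀ \ Eg, Disjoint g a := by
        intro a ha
        have hnot := (mem_sdiff.mp ha).2
        rw [hEgdef, mem_filter] at hnot
        push_neg at hnot
        have h2 := hnot (mem_sdiff.mp ha).1
        exact Finset.disjoint_iff_inter_eq_empty.mpr h2
      have hdgCH : ∀ f ∈ CH, Disjoint g f := by
        intro f hf
        rw [Finset.disjoint_left]
        intro x hxg hxf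
        by_cases hxW : x ∈ W
        · obtain ⟨e', he', hfW⟩ := hCHwit f hf
          have hxx : x ∈ f ∩ W := mem_inter.mpr ⟨hxf, hxW⟩
          rw [hfW, mem_singleton] at hxx
          subst hxx
          exact hA e' (hEgMr e' he') hxg
        · have hxx : x ∈ f ∩ (g \ W) := mem_inter.mpr ⟨hxf, mem_sdiff.mpr ⟨hxg, hxW⟩⟩
          rw [hCHg f hf] at hxx
          exact notMem_empty _ hxx
      have hM'MS : M' ∈ MS := by
        rw [hMSdef, mem_filter, mem_powerset]
        constructor
        · intro x hx
          rw [hM'def, mem_insert, mem_union] at hx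
          rcases hx with rfl | hx | hx
          · exact hg
          · exact hM₀H (mem_sdiff.mp hx).1
          · exact hCHH hx
        · intro a ha b hb hne
          rw [mem_coe, hM'def, mem_insert, mem_union] at ha hb
          rcases ha with rfl | ha | ha <;> rcases hb with rfl | hb | hb
          · exact absurd rfl hne
          · exact hdgM b hb
          · exact hdgCH b hb
          · exact (hdgM a ha).symm
          · exact hM₀disj (mem_coe.mpr (mem_sdiff.mp ha).1)
              (mem_coe.mpr (mem_sdiff.mp hb).1) hne
          · exact (hdCHM b hb a ha).symm
          · exact (hdgCH a ha).symm
          · exact hdCHM a ha b hb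
          · exact hdCHCH a ha b hb hne
      have hcontr := hmax M' hM'MS
      omega
  -- membership facts about private edges
  have hvPmem : ∀ v : Vtx r n, ∀ g ∈ P v, v ∈ g ∧ v ∈ W := by
    intro v g hg
    have h2 := (mem_filter.mp hg).2
    have hv : v ∈ g ∩ W := by rw [h2]; exact mem_singleton_self v
    exact ⟨(mem_inter.mp hv).1, (mem_inter.mp hv).2⟩
  -- first bound: private degree of a non-rich vertex
  have hPbound1 : ∀ v : Vtx r n, ¬ Rich v →
      (P v).card ≤ (m*(s-1)) * (s-1) * Bsum r n (s-2) := by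
    intro v hrich
    set TS := (P v).powerset.filter
      (fun TT => ∀ f ∈ TT, ∀ f' ∈ TT, f ≠ f' → f ∩ f' ⊆ {v}) with hTSdef
    have hTSne : TS.Nonempty := ⟨∅, by simp [hTSdef]⟩
    obtain ⟨TT₀, hTT₀TS, hTT₀max⟩ := Finset.exists_max_image TS Finset.card hTSne
    have hTT₀P : TT₀ ⊆ P v := mem_powerset.mp (mem_filter.mp hTT₀TS).1
    have hTT₀pair := (mem_filter.mp hTT₀TS).2
    have hTT₀card : TT₀.card ≤ m * (s-1) := by
      by_contra hcon
      push_neg at hcon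
      obtain ⟨TT, hTT, hTTcard⟩ := Finset.exists_subset_card_eq (show t ≤ TT₀.card by omega)
      exact hrich ⟨TT, hTT.trans hTT₀P, hTTcard,
        fun f hf f' hf' hne => hTT₀pair f (hTT hf) f' (hTT hf') hne⟩
    set U := (TT₀.biUnion id).erase v with hUdef
    have hUcard : U.card ≤ (m*(s-1)) * (s-1) := by
      calc U.card ≤ (TT₀.biUnion (fun f => f.erase v)).card := by
            apply card_le_card
            intro x hx
            rw [hUdef, mem_erase] at hx
            obtain ⟨hxv, hx⟩ := hx
            obtain ⟨f, hf, hxf⟩ := mem_biUnion.mp hx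
            exact mem_biUnion.mpr ⟨f, hf, mem_erase.mpr ⟨hxv, hxf⟩⟩
      _ ≤ ∑ f ∈ TT₀, (f.erase v).card := card_biUnion_le
      _ ≤ ∑ _f ∈ TT₀, (s-1) := by
            apply Finset.sum_le_sum
            intro f hf
            have hfH : f ∈ H := (mem_filter.mp (hTT₀P hf)).1
            rw [card_erase_of_mem (hvPmem v f (hTT₀P hf)).1, hedgecard f hfH]
      _ = TT₀.card * (s-1) := by rw [Finset.sum_const, smul_eq_mul]
      _ ≤ (m*(s-1)) * (s-1) := Nat.mul_le_mul_right _ hTT₀card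
    have hPU : ∀ g ∈ P v, (g ∩ U).Nonempty := by
      intro g hg
      by_contra hcon
      have hgH : g ∈ H := (mem_filter.mp hg).1
      have hgTT : g ∉ TT₀ := by
        intro hgT
        have hne : (g.erase v).Nonempty := by
          rw [← Finset.card_pos, card_erase_of_mem (hvPmem v g hg).1, hedgecard g hgH]
          omega
        obtain ⟨x, hx⟩ := hne
        apply hcon
        refine ⟨x, mem_inter.mpr ⟨mem_of_mem_erase hx, ?_⟩⟩
        rw [hUdef, mem_erase]
        exact ⟨(mem_erase.mp hx).1, mem_biUnion.mpr ⟨g, hgT, mem_of_mem_erase hx⟩⟩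
      have hins : insert g TT₀ ∈ TS := by
        rw [hTSdef, mem_filter, mem_powerset]
        constructor
        · exact insert_subset hg hTT₀P
        · have hkey : ∀ f' ∈ TT₀, g ∩ f' ⊆ {v} := by
            intro f' hf' x hx
            rw [mem_inter] at hx
            rw [mem_singleton]
            by_contra hxv
            apply hcon
            refine ⟨x, mem_inter.mpr ⟨hx.1, ?_⟩⟩
            rw [hUdef, mem_erase]
            exact ⟨hxv, mem_biUnion.mpr ⟨f', hf', hx.2⟩⟩
          intro f hf f' hf' hne
          rw [mem_insert] at hf hf'
          rcases hf with rfl | hf <;> rcases hf' with rfl | hf'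
          · exact absurd rfl hne
          · exact hkey f' hf'
          · intro x hx
            rw [mem_inter] at hx
            exact hkey f hf (mem_inter.mpr ⟨hx.2, hx.1⟩)
          · exact hTT₀pair f hf f' hf' hne
      have := hTT₀max (insert g TT₀) hins
      rw [card_insert_of_notMem hgTT] at this
      omega
    calc (P v).card
        ≤ (U.biUnion (fun u => H.filter (fun g => v ∈ g ∧ u ∈ g))).card := by
          apply card_le_card
          intro g hg
          obtain ⟨x, hx⟩ := hPU g hg
          rw [mem_inter] at hx
          exact mem_biUnion.mpr ⟨x, hx.2,
            mem_filter.mpr ⟨(mem_filter.mp hg).1, (hvPmem v g hg).1, hx.1⟩⟩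
    _ ≤ ∑ u ∈ U, (H.filter (fun g => v ∈ g ∧ u ∈ g)).card := card_biUnion_le
    _ ≤ ∑ _u ∈ U, Bsum r n (s-2) := by
          apply Finset.sum_le_sum
          intro u hu
          have hvu : v ≠ u := by
            intro h
            rw [hUdef, mem_erase] at hu
            exact hu.1 h.symm
          exact le_trans (card_le_card (Finset.filter_subset_filter _ hH))
            (count_pair hmono hr2 v u hvu)
    _ = U.card * Bsum r n (s-2) := by rw [Finset.sum_const, smul_eq_mul]
    _ ≤ (m*(s-1)) * (s-1) * Bsum r n (s-2) := Nat.mul_le_mul_right _ hUcard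
  -- second bound: cross-intersection at a matching edge
  have hPbound2 : ∀ e ∈ Mp, ∀ v ∈ e, ∀ w ∈ e, v ≠ w → ∀ f₀ ∈ P v,
      (P w).card ≤ (s-1) * Bsum r n (s-2) := by
    intro e he v hv w hw hvw f₀ hf₀
    have heM₀ : e ∈ M₀ := hMpM₀ he
    have hf₀H : f₀ ∈ H := (mem_filter.mp hf₀).1
    have hf₀W : f₀ ∩ W = {v} := (mem_filter.mp hf₀).2
    have hcross : ∀ g ∈ P w, (g ∩ (f₀.erase v)).Nonempty := by
      intro g hg
      by_contra hcon
      have hgH : g ∈ H := (mem_filter.mp hg).1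
      have hgW : g ∩ W = {w} := (mem_filter.mp hg).2
      have hdisjfg : Disjoint f₀ g := by
        rw [Finset.disjoint_left]
        intro x hxf hxg
        have hxv : x ≠ v := by
          intro h
          have hvW : v ∈ W := (hvPmem v f₀ hf₀).2
          have hgv : v ∈ g ∩ W := mem_inter.mpr ⟨h ▸ hxg, hvW⟩
          rw [hgW, mem_singleton] at hgv
          exact hvw hgv
        exact hcon ⟨x, mem_inter.mpr ⟨hxg, mem_erase.mpr ⟨hxv, hxf⟩⟩⟩
      have hsideW : ∀ e' ∈ M₀.erase e, ∀ x ∈ e', x ∈ W :=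
        fun e' he' x hx => heW e' (mem_of_mem_erase he') hx
      have hdf : ∀ e' ∈ M₀.erase e, Disjoint f₀ e' := by
        intro e' he'
        rw [Finset.disjoint_left]
        intro x hxf hxe'
        have : x ∈ f₀ ∩ W := mem_inter.mpr ⟨hxf, hsideW e' he' x hxe'⟩
        rw [hf₀W, mem_singleton] at this
        subst this
        have hee' : e ≠ e' := fun h => (mem_erase.mp he').1 h.symm
        exact (Finset.disjoint_left.mp (hM₀disj (mem_coe.mpr heM₀)
          (mem_coe.mpr (mem_of_mem_erase he')) hee') hv) hxe'
      have hdg : ∀ e' ∈ M₀.erase e, Disjoint g e' := by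
        intro e' he'
        rw [Finset.disjoint_left]
        intro x hxg hxe'
        have : x ∈ g ∩ W := mem_inter.mpr ⟨hxg, hsideW e' he' x hxe'⟩
        rw [hgW, mem_singleton] at this
        subst this
        have hee' : e ≠ e' := fun h => (mem_erase.mp he').1 h.symm
        exact (Finset.disjoint_left.mp (hM₀disj (mem_coe.mpr heM₀)
          (mem_coe.mpr (mem_of_mem_erase he')) hee') hw) hxe'
      have hgnef : g ≠ f₀ := by
        intro h
        rw [h, hf₀W] at hgW
        rw [Finset.singleton_inj] at hgW
        exact hvw hgW
      have hnotinW : ∀ f', f' ∈ H → f' ∩ W = {v} ∨ f' ∩ W = {w} → f' ∉ M₀.erase e := by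
        intro f' hf'H hf'W hmem
        have hsub : f' ⊆ W := heW f' (mem_of_mem_erase hmem)
        have heq : f' ∩ W = f' := Finset.inter_eq_left.mpr hsub
        have hcard := hedgecard f' hf'H
        rcases hf'W with h | h <;> rw [h] at heq <;>
          · have := congrArg Finset.card heq
            rw [card_singleton] at this
            omega
      have hfnotin : f₀ ∉ M₀.erase e := hnotinW f₀ hf₀H (Or.inl hf₀W)
      have hgnotin : g ∉ M₀.erase e := hnotinW g hgH (Or.inr hgW)
      set M' := insert f₀ (insert g (M₀.erase e)) with hM'def
      have hM'MS : M' ∈ MS := by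
        rw [hMSdef, mem_filter, mem_powerset]
        constructor
        · intro x hx
          rw [hM'def, mem_insert, mem_insert] at hx
          rcases hx with rfl | rfl | hx
          · exact hf₀H
          · exact hgH
          · exact hM₀H (mem_of_mem_erase hx)
        · intro a ha b hb hne
          rw [mem_coe, hM'def, mem_insert, mem_insert] at ha hb
          rcases ha with rfl | rfl | ha <;> rcases hb with rfl | rfl | hb
          · exact absurd rfl hne
          · exact hdisjfg
          · exact hdf b hb
          · exact hdisjfg.symm
          · exact absurd rfl hne
          · exact hdg b hb
          · exact (hdf a ha).symm
          · exact (hdg a ha).symm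
          · exact hM₀disj (mem_coe.mpr (mem_of_mem_erase ha))
              (mem_coe.mpr (mem_of_mem_erase hb)) hne
      have hM'card : M'.card = m + 1 := by
        have hm1 : 1 ≤ m := by
          rw [hmdef]
          exact Finset.card_pos.mpr ⟨e, heM₀⟩
        rw [hM'def, card_insert_of_notMem, card_insert_of_notMem hgnotin,
          card_erase_of_mem heM₀]
        · omega
        · intro hmem
          rcases mem_insert.mp hmem with h | h
          · exact hgnef h.symm
          · exact hfnotin h
      have := hmax M' hM'MS
      omega
    have hwf₀ : ∀ u ∈ f₀.erase v, w ≠ u := by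
      intro u hu h
      subst h
      have hwW : w ∈ W := heW e heM₀ hw
      have : w ∈ f₀ ∩ W := mem_inter.mpr ⟨mem_of_mem_erase hu, hwW⟩
      rw [hf₀W, mem_singleton] at this
      exact hvw this.symm
    calc (P w).card
        ≤ ((f₀.erase v).biUnion (fun u => H.filter (fun g => w ∈ g ∧ u ∈ g))).card := by
          apply card_le_card
          intro g hg
          obtain ⟨x, hx⟩ := hcross g hg
          rw [mem_inter] at hx
          exact mem_biUnion.mpr ⟨x, hx.2,
            mem_filter.mpr ⟨(mem_filter.mp hg).1, (hvPmem w g hg).1, hx.1⟩⟩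
    _ ≤ ∑ u ∈ f₀.erase v, (H.filter (fun g => w ∈ g ∧ u ∈ g)).card := card_biUnion_le
    _ ≤ ∑ _u ∈ f₀.erase v, Bsum r n (s-2) := by
          apply Finset.sum_le_sum
          intro u hu
          exact le_trans (card_le_card (Finset.filter_subset_filter _ hH))
            (count_pair hmono hr2 w u (hwf₀ u hu))
    _ = (f₀.erase v).card * Bsum r n (s-2) := by rw [Finset.sum_const, smul_eq_mul]
    _ = (s-1) * Bsum r n (s-2) := by
          rw [card_erase_of_mem (hvPmem v f₀ hf₀).1, hedgecard f₀ hf₀H]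
  -- the bound on private edges at poor matching edges
  have hpoorP : ∀ e ∈ Mp, ∑ v ∈ e, (P v).card ≤ ((m+1)*(s-1)^2) * Bsum r n (s-2) := by
    intro e he
    have hpoor : ∀ v ∈ e, ¬ Rich v := by
      have h := (mem_filter.mp he).2
      push_neg at h
      exact h
    by_cases hPe : ∀ v ∈ e, P v = ∅
    · have : ∑ v ∈ e, (P v).card = 0 := by
        apply Finset.sum_eq_zero
        intro v hv
        rw [hPe v hv, card_empty]
      rw [this]
      exact Nat.zero_le _
    · push_neg at hPe
      obtain ⟨vs, hvs, hPvs⟩ := hPe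
      obtain ⟨f₀, hf₀⟩ := hPvs
      have hsum : (P vs).card + ∑ v ∈ e.erase vs, (P v).card = ∑ v ∈ e, (P v).card :=
        Finset.add_sum_erase e (fun v => (P v).card) hvs
      have h1 : (P vs).card ≤ (m*(s-1)) * (s-1) * Bsum r n (s-2) :=
        hPbound1 vs (hpoor vs hvs)
      have h2 : ∑ v ∈ e.erase vs, (P v).card ≤ (s-1) * ((s-1) * Bsum r n (s-2)) := by
        calc ∑ v ∈ e.erase vs, (P v).card ≤ ∑ _v ∈ e.erase vs, ((s-1) * Bsum r n (s-2)) := by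
              apply Finset.sum_le_sum
              intro w hw
              exact hPbound2 e he vs hvs w (mem_of_mem_erase hw)
                (fun h => (mem_erase.mp hw).1 h.symm) f₀ hf₀
        _ = (e.erase vs).card * ((s-1) * Bsum r n (s-2)) := by
              rw [Finset.sum_const, smul_eq_mul]
        _ = (s-1) * ((s-1) * Bsum r n (s-2)) := by
              rw [card_erase_of_mem hvs, hedgecard e (hM₀H (hMpM₀ he))]
      have heq : (m*(s-1)) * (s-1) * Bsum r n (s-2) + (s-1) * ((s-1) * Bsum r n (s-2))
          = ((m+1)*(s-1)^2) * Bsum r n (s-2) := by ring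
      omega
  -- assembly
  set B2 := Bsum r n (s-2) with hB2def
  set D := Bsum r n (s-1) with hDdef
  have hsplit : H ⊆ (Mr.biUnion (fun e => H.filter (fun g => wit e ∈ g)))
      ∪ (Mp.biUnion (fun e => e.biUnion (fun u => H.filter (fun g => u ∈ g)))) := by
    intro g hg
    rcases hcover g hg with ⟨e, he, hwe⟩ | ⟨e, he, hne⟩
    · exact mem_union_left _ (mem_biUnion.mpr ⟨e, he, mem_filter.mpr ⟨hg, hwe⟩⟩)
    · obtain ⟨x, hx⟩ := hne
      rw [mem_inter] at hx
      exact mem_union_right _ (mem_biUnion.mpr ⟨e, he,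
        mem_biUnion.mpr ⟨x, hx.2, mem_filter.mpr ⟨hg, hx.1⟩⟩⟩)
  have hdegD : ∀ v : Vtx r n, (H.filter (fun g => v ∈ g)).card ≤ D :=
    fun v => le_trans (card_le_card (Finset.filter_subset_filter _ hH)) (count_vertex hmono hr2 v)
  have hvertsplit : ∀ e ∈ Mp, ∀ u ∈ e,
      (H.filter (fun g => u ∈ g)).card ≤ (P u).card + (m*s-1) * B2 := by
    intro e he u hu
    have huW : u ∈ W := heW e (hMpM₀ he) hu
    have hsubu : H.filter (fun g => u ∈ g) ⊆ (P u)
        ∪ ((W.erase u).biUnion (fun w => H.filter (fun g => u ∈ g ∧ w ∈ g))) := by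
      intro g hg
      rw [mem_filter] at hg
      by_cases hx : g ∩ W = {u}
      · exact mem_union_left _ (mem_filter.mpr ⟨hg.1, hx⟩)
      · have huGW : u ∈ g ∩ W := mem_inter.mpr ⟨hg.2, huW⟩
        have hex : ∃ w ∈ g ∩ W, w ≠ u := by
          by_contra hcon
          push_neg at hcon
          exact hx (Finset.eq_singleton_iff_unique_mem.mpr ⟨huGW, fun w hw => hcon w hw⟩)
        obtain ⟨w, hw, hwu⟩ := hex
        apply mem_union_right
        exact mem_biUnion.mpr ⟨w, mem_erase.mpr ⟨hwu, (mem_inter.mp hw).2⟩,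
          mem_filter.mpr ⟨hg.1, hg.2, (mem_inter.mp hw).1⟩⟩
    calc (H.filter (fun g => u ∈ g)).card
        ≤ ((P u) ∪ ((W.erase u).biUnion (fun w => H.filter (fun g => u ∈ g ∧ w ∈ g)))).card :=
          card_le_card hsubu
    _ ≤ (P u).card + ((W.erase u).biUnion (fun w => H.filter (fun g => u ∈ g ∧ w ∈ g))).card :=
          card_union_le _ _
    _ ≤ (P u).card + (m*s-1) * B2 := by
        apply Nat.add_le_add_left
        calc ((W.erase u).biUnion (fun w => H.filter (fun g => u ∈ g ∧ w ∈ g))).card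
            ≤ ∑ w ∈ W.erase u, (H.filter (fun g => u ∈ g ∧ w ∈ g)).card := card_biUnion_le
        _ ≤ ∑ _w ∈ W.erase u, B2 := by
            apply Finset.sum_le_sum
            intro w hw
            have huw : u ≠ w := fun h => (mem_erase.mp hw).1 h.symm
            exact le_trans (card_le_card (Finset.filter_subset_filter _ hH))
              (count_pair hmono hr2 u w huw)
        _ = (W.erase u).card * B2 := by rw [Finset.sum_const, smul_eq_mul]
        _ ≤ (m*s-1) * B2 := by
            apply Nat.mul_le_mul_right
            have h1 : 0 < W.card := Finset.card_pos.mpr ⟨u, huW⟩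
            rw [card_erase_of_mem huW]
            omega
  have hMrsum : (Mr.biUnion (fun e => H.filter (fun g => wit e ∈ g))).card ≤ Mr.card * D := by
    calc (Mr.biUnion (fun e => H.filter (fun g => wit e ∈ g))).card
        ≤ ∑ e ∈ Mr, (H.filter (fun g => wit e ∈ g)).card := card_biUnion_le
    _ ≤ ∑ _e ∈ Mr, D := Finset.sum_le_sum (fun e _ => hdegD (wit e))
    _ = Mr.card * D := by rw [Finset.sum_const, smul_eq_mul]
  have hMpsum : (Mp.biUnion (fun e => e.biUnion (fun u => H.filter (fun g => u ∈ g)))).card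
      ≤ Mp.card * (((m+1)*(s-1)^2) * B2 + s*((m*s-1)*B2)) := by
    calc (Mp.biUnion (fun e => e.biUnion (fun u => H.filter (fun g => u ∈ g)))).card
        ≤ ∑ e ∈ Mp, (e.biUnion (fun u => H.filter (fun g => u ∈ g))).card := card_biUnion_le
    _ ≤ ∑ _e ∈ Mp, (((m+1)*(s-1)^2) * B2 + s*((m*s-1)*B2)) := by
        apply Finset.sum_le_sum
        intro e he
        calc (e.biUnion (fun u => H.filter (fun g => u ∈ g))).card
            ≤ ∑ u ∈ e, (H.filter (fun g => u ∈ g)).card := card_biUnion_le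
        _ ≤ ∑ u ∈ e, ((P u).card + (m*s-1)*B2) :=
            Finset.sum_le_sum (fun u hu => hvertsplit e he u hu)
        _ = (∑ u ∈ e, (P u).card) + e.card * ((m*s-1)*B2) := by
            rw [Finset.sum_add_distrib, Finset.sum_const, smul_eq_mul]
        _ ≤ ((m+1)*(s-1)^2) * B2 + s*((m*s-1)*B2) := by
            apply Nat.add_le_add
            · exact hpoorP e he
            · rw [hedgecard e (hM₀H (hMpM₀ he))]
    _ = Mp.card * (((m+1)*(s-1)^2) * B2 + s*((m*s-1)*B2)) := by
        rw [Finset.sum_const, smul_eq_mul]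
  have hkey := key_ineq hmono hs (le_of_lt hsr) hr0
  have hnum : (s-1) * ((((m+1)*(s-1)^2 + s*(m*s-1))) * B2) ≤ (s-1) * D := by
    calc (s-1) * ((((m+1)*(s-1)^2 + s*(m*s-1))) * B2)
        = ((s-1) * ((m+1)*(s-1)^2 + s*(m*s-1))) * B2 := by ring
    _ ≤ (2*(s^3*k)) * B2 := Nat.mul_le_mul_right _ (arith_main hs (by omega))
    _ ≤ ((r-s+1) * n p0) * B2 := Nat.mul_le_mul_right _ hbig'
    _ = (r-s+1) * (n p0 * B2) := by ring
    _ ≤ (s-1) * D := hkey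
  have hCD : ((m+1)*(s-1)^2 + s*(m*s-1)) * B2 ≤ D :=
    Nat.le_of_mul_le_mul_left hnum (by omega : 0 < s-1)
  have hMrMp : Mr.card + Mp.card = m := by
    rw [hMrdef, hMpdef, hmdef]
    exact Finset.card_filter_add_card_filter_not _
  calc H.card
      ≤ ((Mr.biUnion (fun e => H.filter (fun g => wit e ∈ g)))
        ∪ (Mp.biUnion (fun e => e.biUnion (fun u => H.filter (fun g => u ∈ g))))).card :=
        card_le_card hsplit
  _ ≤ (Mr.biUnion (fun e => H.filter (fun g => wit e ∈ g))).card
        + (Mp.biUnion (fun e => e.biUnion (fun u => H.filter (fun g => u ∈ g)))).card :=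
        card_union_le _ _
  _ ≤ Mr.card * D + Mp.card * (((m+1)*(s-1)^2) * B2 + s*((m*s-1)*B2)) :=
        Nat.add_le_add hMrsum hMpsum
  _ ≤ Mr.card * D + Mp.card * D := by
        apply Nat.add_le_add_left
        apply Nat.mul_le_mul_left
        have he : ((m+1)*(s-1)^2) * B2 + s*((m*s-1)*B2)
            = ((m+1)*(s-1)^2 + s*(m*s-1)) * B2 := by ring
        rw [he]
        exact hCD
  _ = m * D := by rw [← Nat.add_mul, hMrMp]
  _ ≤ (k-1) * D := Nat.mul_le_mul_right _ hmk

end UpperLt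

theorem stmt7 (r s k : ℕ) (hs : 2 ≤ s) (hsr : s ≤ r) (hk : 1 ≤ k) (n : Fin r → ℕ)
    (hmono : Monotone n)
    (h1 : s ≤ r - 2 → s ^ 3 * k + s * r ≤ n ⟨0, by omega⟩)
    (h2 : s = r - 1 → s ^ 3 * k ^ 2 + s * r ≤ n ⟨0, by omega⟩)
    (h3 : s = r → k ≤ n ⟨0, by omega⟩) :
    IsGreatest {m : ℕ | ∃ H ⊆ crossEdges r s n, ¬ hasMatching H k ∧ H.card = m}
      ((k - 1) * ∑ A ∈ (Finset.univ.filter fun i : Fin r => 0 < i.val).powersetCard (s - 1),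
        ∏ i ∈ A, n i) := by
  have hr0 : 0 < r := by omega
  have hDeq : (∑ A ∈ (Finset.univ.filter fun i : Fin r => 0 < i.val).powersetCard (s - 1),
      ∏ i ∈ A, n i) = Bsum r n (s - 1) := rfl
  have hn0k : k ≤ n ⟨0, hr0⟩ := by
    rcases Nat.lt_or_ge s r with h | h
    · rcases Nat.lt_or_ge s (r-1) with h' | h'
      · have := h1 (by omega)
        have hks : k ≤ s^3*k := Nat.le_mul_of_pos_left k (by positivity)
        omega
      · have hs' : s = r - 1 := by omega
        have := h2 hs'
        have hks : k ≤ s^3*k^2 := by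
          calc k ≤ k^2 := by nlinarith
          _ ≤ s^3*k^2 := Nat.le_mul_of_pos_left _ (by positivity)
        omega
    · exact h3 (by omega)
  constructor
  · rw [hDeq]
    obtain ⟨H, h1', h2', h3'⟩ := lower_bound hmono hs hsr hk hr0 hn0k
    exact ⟨H, h1', h2', h3'⟩
  · rintro m ⟨H, hH, hno, rfl⟩
    rw [hDeq]
    rcases Nat.lt_or_ge s r with hlt | hge
    · apply upper_lt hmono hs hlt hk _ H hH hno
      rcases Nat.lt_or_ge s (r-1) with h' | h'
      · have hb := h1 (by omega)
        have h3' : 3 ≤ r - s + 1 := by omega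
        calc 2*s^3*k ≤ 3 * (s^3*k + s*r) := by
              have h0 : 2*s^3*k = 2*(s^3*k) := by ring
              rw [h0]; omega
        _ ≤ (r-s+1) * (n ⟨0, by omega⟩) := by
            apply Nat.mul_le_mul h3' hb
      · have hs' : s = r - 1 := by omega
        have hb := h2 hs'
        have h2' : 2 ≤ r - s + 1 := by omega
        calc 2*s^3*k ≤ 2 * (s^3*k^2 + s*r) := by
              have h0 : 2*s^3*k = 2*(s^3*k) := by ring
              have : s^3*k ≤ s^3*k^2 := by
                apply Nat.mul_le_mul_left
                nlinarith
              rw [h0]; omega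
        _ ≤ (r-s+1) * (n ⟨0, by omega⟩) := by
            apply Nat.mul_le_mul h2' hb
    · have hsr' : s = r := by omega
      subst hsr'
      exact upper_eq hmono hs hk hr0 (by omega) H hH hno
end

section
/- Let 3 ≤ s ≤ r−1 and k ≥ 1, and suppose n ≥ s³k + sr when s ≤ r−2, and n ≥ s³k² + sr when s = r−1. Then the maximum number of edges in a subhypergraph of the complete r-partite s-uniform hypergraph with all r parts of size n containing no matching of size k equals (k−1) · C(r−1, s−1) · n^{s−1}. -/
open Finset

def transSets (r N m : ℕ) (A : Finset (Fin r)) : Finset (Finset ((i : Fin r) × Fin N)) :=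
  univ.filter fun S => S.card = m ∧ (∀ i, (S.filter fun v => v.1 = i).card ≤ 1)
    ∧ ∀ v ∈ S, v.1 ∈ A


lemma mem_transSets {r N m : ℕ} {A : Finset (Fin r)} {S : Finset ((i : Fin r) × Fin N)} :
    S ∈ transSets r N m A ↔
      S.card = m ∧ (∀ i, (S.filter fun v => v.1 = i).card ≤ 1) ∧ ∀ v ∈ S, v.1 ∈ A := by
  simp [transSets]

lemma injOn_fst {r N m : ℕ} {A : Finset (Fin r)} {S : Finset ((i : Fin r) × Fin N)}
    (hS : S ∈ transSets r N m A) : ∀ u ∈ S, ∀ v ∈ S, u.1 = v.1 → u = v := by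
  intro u hu v hv huv
  have h := (mem_transSets.mp hS).2.1 v.1
  exact Finset.card_le_one.mp h u (mem_filter.mpr ⟨hu, huv⟩) v (mem_filter.mpr ⟨hv, rfl⟩)


lemma sigma_eta {r N : ℕ} {a : Fin r} {c : (i : Fin r) × Fin N} (h : c.1 = a) :
    (⟨a, c.2⟩ : (i : Fin r) × Fin N) = c := by
  obtain ⟨c1, c2⟩ := c; cases h; rfl

lemma transSets_card (r N m : ℕ) (A : Finset (Fin r)) :
    (transSets r N m A).card = A.card.choose m * N ^ m := by
  classical
  have hrhs : ((A.powersetCard m).sigma fun P => P.pi fun _ => (univ : Finset (Fin N))).card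
      = A.card.choose m * N ^ m := by
    rw [Finset.card_sigma,
      Finset.sum_congr rfl (fun P hP => show (P.pi fun _ => (univ : Finset (Fin N))).card = N ^ m by
        rw [Finset.card_pi, Finset.prod_const, (Finset.mem_powersetCard.mp hP).2]
        simp),
      Finset.sum_const, Finset.card_powersetCard, smul_eq_mul]
  rw [← hrhs]
  apply (Finset.card_bij
    (i := fun (x : (P : Finset (Fin r)) × (∀ a ∈ P, Fin N)) _ =>
      x.1.attach.image fun a => (⟨a.1, x.2 a.1 a.2⟩ : (i : Fin r) × Fin N)) ?_ ?_ ?_).symm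
  · -- maps into transSets
    rintro ⟨P, f⟩ hx
    rw [Finset.mem_sigma, Finset.mem_powersetCard] at hx
    refine mem_transSets.mpr ⟨?_, ?_, ?_⟩
    · rw [Finset.card_image_of_injOn, Finset.card_attach]
      · exact hx.1.2
      · intro a _ b _ hab
        have : a.1 = b.1 := congrArg Sigma.fst hab
        exact Subtype.ext this
    · intro i
      rw [Finset.card_le_one]
      intro u hu v hv
      simp only [Finset.mem_filter, Finset.mem_image, Finset.mem_attach, true_and] at hu hv
      obtain ⟨⟨a, ha⟩, rfl⟩ := hu.1
      obtain ⟨⟨b, hb⟩, rfl⟩ := hv.1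
      have : a = b := by
        have h1 := hu.2; have h2 := hv.2
        simp only at h1 h2
        rw [h1, ← h2]
      subst this; rfl
    · intro v hv
      simp only [Finset.mem_image, Finset.mem_attach, true_and] at hv
      obtain ⟨⟨a, ha⟩, rfl⟩ := hv
      exact hx.1.1 ha
  · -- injective
    rintro ⟨P, f⟩ hx ⟨Q, g⟩ hy h
    have hPQ : P = Q := by
      have := congrArg (Finset.image Sigma.fst) h
      rwa [Finset.image_image, Finset.image_image,
        show (Sigma.fst ∘ fun a : {x // x ∈ P} => (⟨a.1, f a.1 a.2⟩ : (i : Fin r) × Fin N)) = fun a => a.1 from rfl,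
        show (Sigma.fst ∘ fun a : {x // x ∈ Q} => (⟨a.1, g a.1 a.2⟩ : (i : Fin r) × Fin N)) = fun a => a.1 from rfl,
        Finset.attach_image_val, Finset.attach_image_val] at this
    subst hPQ
    refine Sigma.ext rfl (heq_of_eq ?_)
    funext a ha
    simp only at h
    have hmem : (⟨a, f a ha⟩ : (i : Fin r) × Fin N) ∈
        P.attach.image fun b => (⟨b.1, g b.1 b.2⟩ : (i : Fin r) × Fin N) := by
      rw [← h]
      exact Finset.mem_image.mpr ⟨⟨a, ha⟩, Finset.mem_attach _ _, rfl⟩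
    obtain ⟨⟨b, hb⟩, _, hbe⟩ := Finset.mem_image.mp hmem
    have hba : b = a := congrArg Sigma.fst hbe
    subst hba
    exact (eq_of_heq (Sigma.mk.inj_iff.mp hbe).2).symm
  · -- surjective
    intro S hS
    obtain ⟨hcard, hone, hsub⟩ := mem_transSets.mp hS
    set P := S.image Sigma.fst with hP
    have hex : ∀ a ∈ P, ∃! v, v ∈ S ∧ v.1 = a := by
      intro a ha
      obtain ⟨v, hv, rfl⟩ := Finset.mem_image.mp ha
      exact ⟨v, ⟨hv, rfl⟩, fun u hu => injOn_fst hS u hu.1 v hv hu.2⟩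
    refine ⟨⟨P, fun a ha => (S.choose (fun v => v.1 = a) (hex a ha)).2⟩, ?_, ?_⟩
    · rw [Finset.mem_sigma, Finset.mem_powersetCard]
      refine ⟨⟨?_, ?_⟩, ?_⟩
      · intro a ha
        obtain ⟨v, hv, rfl⟩ := Finset.mem_image.mp ha
        exact hsub v hv
      · rw [Finset.card_image_of_injOn (fun u hu v hv => injOn_fst hS u hu v hv), hcard]
      · exact Finset.mem_pi.mpr fun a ha => Finset.mem_univ _
    · ext v
      simp only [Finset.mem_image, Finset.mem_attach, true_and]
      constructor
      · rintro ⟨⟨a, ha⟩, rfl⟩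
        simp only
        have hprop := S.choose_property (fun u => u.1 = a) (hex a ha)
        have hmm := S.choose_mem (fun u => u.1 = a) (hex a ha)
        rw [sigma_eta hprop]; exact hmm
      · intro hv
        refine ⟨⟨v.1, Finset.mem_image_of_mem _ hv⟩, ?_⟩
        simp only
        have hprop := S.choose_property (fun u => u.1 = v.1) (hex v.1 (Finset.mem_image_of_mem _ hv))
        have hmm := S.choose_mem (fun u => u.1 = v.1) (hex v.1 (Finset.mem_image_of_mem _ hv))
        rw [sigma_eta hprop]
        exact injOn_fst hS _ hmm v hv hprop

lemma mem_crossEdges {r s N : ℕ} {e : Finset ((i : Fin r) × Fin N)} :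
    e ∈ crossEdges r s (fun _ => N) ↔
      e.card = s ∧ ∀ i : Fin r, (e.filter fun v => v.1 = i).card ≤ 1 := by
  simp [crossEdges]

lemma crossEdges_injOn_fst {r s N : ℕ} {e : Finset ((i : Fin r) × Fin N)}
    (he : e ∈ crossEdges r s (fun _ => N)) :
    ∀ u ∈ e, ∀ v ∈ e, u.1 = v.1 → u = v := by
  intro u hu v hv huv
  have h := (mem_crossEdges.mp he).2 v.1
  exact Finset.card_le_one.mp h u (mem_filter.mpr ⟨hu, huv⟩) v (mem_filter.mpr ⟨hv, rfl⟩)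

lemma deg_eq (r s N : ℕ) (hs : 1 ≤ s) (v : (i : Fin r) × Fin N) :
    ((crossEdges r s fun _ => N).filter fun e => v ∈ e).card
      = (r-1).choose (s-1) * N ^ (s-1) := by
  classical
  have key : ((crossEdges r s fun _ => N).filter fun e => v ∈ e).card
      = (transSets r N (s-1) (univ.erase v.1)).card := by
    apply Finset.card_bij' (i := fun e _ => e.erase v) (j := fun S _ => insert v S)
    · intro e he
      exact Finset.insert_erase (Finset.mem_filter.mp he).2
    · intro S hS
      refine Finset.erase_insert ?_
      obtain ⟨_, _, hsub⟩ := mem_transSets.mp hS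
      exact fun h => (Finset.mem_erase.mp (hsub v h)).1 rfl
    · rintro e he
      rw [Finset.mem_filter] at he
      obtain ⟨hce, hve⟩ := he
      obtain ⟨hcard, hone⟩ := mem_crossEdges.mp hce
      refine mem_transSets.mpr ⟨by rw [Finset.card_erase_of_mem hve, hcard], ?_, ?_⟩
      · intro i
        exact le_trans (Finset.card_le_card
          (Finset.filter_subset_filter _ (Finset.erase_subset _ _))) (hone i)
      · intro u hu
        have hune : u ≠ v := Finset.ne_of_mem_erase hu
        have hue : u ∈ e := Finset.mem_of_mem_erase hu
        refine Finset.mem_erase.mpr ⟨?_, Finset.mem_univ _⟩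
        intro h
        exact hune (crossEdges_injOn_fst hce u hue v hve h)
    · rintro S hS
      obtain ⟨hcard, hone, hsub⟩ := mem_transSets.mp hS
      have hvnS : v ∉ S := fun h => (Finset.mem_erase.mp (hsub v h)).1 rfl
      rw [Finset.mem_filter]
      refine ⟨mem_crossEdges.mpr ⟨?_, ?_⟩, Finset.mem_insert_self _ _⟩
      · rw [Finset.card_insert_of_notMem hvnS, hcard]; omega
      · intro i
        rw [Finset.filter_insert]
        split_ifs with h
        · have hemp : S.filter (fun u => u.1 = i) = ∅ := by
            rw [Finset.filter_eq_empty_iff]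
            intro u hu
            have := (Finset.mem_erase.mp (hsub u hu)).1
            rw [← h]; exact this
          rw [hemp]; simp
        · exact hone i
  rw [key, transSets_card, Finset.card_erase_of_mem (Finset.mem_univ _), Finset.card_univ,
    Fintype.card_fin]

lemma pair_le (r s N : ℕ) (hs : 2 ≤ s) (v w : (i : Fin r) × Fin N) (hvw : v ≠ w) :
    ((crossEdges r s fun _ => N).filter fun e => v ∈ e ∧ w ∈ e).card
      ≤ (r-2).choose (s-2) * N ^ (s-2) := by
  classical
  by_cases h : v.1 = w.1
  · have : ((crossEdges r s fun _ => N).filter fun e => v ∈ e ∧ w ∈ e) = ∅ := by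
      rw [Finset.filter_eq_empty_iff]
      rintro e he ⟨hv, hw⟩
      exact hvw (crossEdges_injOn_fst he v hv w hw h)
    rw [this]; simp
  · have hmaps : ∀ e ∈ (crossEdges r s fun _ => N).filter (fun e => v ∈ e ∧ w ∈ e),
        (e.erase v).erase w ∈ transSets r N (s-2) ((univ.erase v.1).erase w.1) := by
      intro e he
      rw [Finset.mem_filter] at he
      obtain ⟨hce, hv, hw⟩ := he
      obtain ⟨hcard, hone⟩ := mem_crossEdges.mp hce
      have hwv : w ∈ e.erase v := Finset.mem_erase.mpr ⟨fun hh => hvw hh.symm, hw⟩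
      refine mem_transSets.mpr ⟨?_, ?_, ?_⟩
      · rw [Finset.card_erase_of_mem hwv, Finset.card_erase_of_mem hv, hcard]; omega
      · intro i
        exact le_trans (Finset.card_le_card (Finset.filter_subset_filter _
          (subset_trans (Finset.erase_subset _ _) (Finset.erase_subset _ _)))) (hone i)
      · intro u hu
        have hunw : u ≠ w := Finset.ne_of_mem_erase hu
        have hunv : u ≠ v := Finset.ne_of_mem_erase (Finset.mem_of_mem_erase hu)
        have hue : u ∈ e := Finset.mem_of_mem_erase (Finset.mem_of_mem_erase hu)
        refine Finset.mem_erase.mpr ⟨fun hh => hunw (crossEdges_injOn_fst hce u hue w hw hh),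
          Finset.mem_erase.mpr ⟨fun hh => hunv (crossEdges_injOn_fst hce u hue v hv hh),
          Finset.mem_univ _⟩⟩
    have hinj : Set.InjOn (fun e : Finset ((i : Fin r) × Fin N) => (e.erase v).erase w)
        ↑((crossEdges r s fun _ => N).filter (fun e => v ∈ e ∧ w ∈ e)) := by
      intro e1 h1 e2 h2 hee
      simp only [Finset.coe_filter, Set.mem_setOf_eq] at h1 h2
      have r1 : insert v (insert w ((e1.erase v).erase w)) = e1 := by
        rw [Finset.insert_erase (Finset.mem_erase.mpr ⟨fun hh => hvw hh.symm, h1.2.2⟩),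
          Finset.insert_erase h1.2.1]
      have r2 : insert v (insert w ((e2.erase v).erase w)) = e2 := by
        rw [Finset.insert_erase (Finset.mem_erase.mpr ⟨fun hh => hvw hh.symm, h2.2.2⟩),
          Finset.insert_erase h2.2.1]
      simp only at hee
      rw [← r1, ← r2, hee]
    calc ((crossEdges r s fun _ => N).filter fun e => v ∈ e ∧ w ∈ e).card
        ≤ (transSets r N (s-2) ((univ.erase v.1).erase w.1)).card :=
          Finset.card_le_card_of_injOn _ hmaps hinj
      _ = (r-2).choose (s-2) * N ^ (s-2) := by
          rw [transSets_card, Finset.card_erase_of_mem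
            (Finset.mem_erase.mpr ⟨fun hh => h hh.symm, Finset.mem_univ _⟩),
            Finset.card_erase_of_mem (Finset.mem_univ _), Finset.card_univ, Fintype.card_fin,
            Nat.sub_sub]

lemma edge_card_s8 {r s N : ℕ} {H : Finset (Finset ((i : Fin r) × Fin N))}
    (hH : H ⊆ crossEdges r s (fun _ => N)) {e : Finset ((i : Fin r) × Fin N)} (he : e ∈ H) :
    e.card = s := (mem_crossEdges.mp (hH he)).1

lemma matching_of_large (r s N : ℕ) (hs : 2 ≤ s) (hr : 2 ≤ r) :
    ∀ k : ℕ, s^2 * (k+1) ≤ N →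
    ∀ H ⊆ crossEdges r s (fun _ => N),
      k * ((r-1).choose (s-1) * N ^ (s-1)) < H.card → hasMatching H (k+1) := by
  classical
  intro k
  induction k with
  | zero =>
    intro _ H _ hcard
    obtain ⟨e, he⟩ := Finset.card_pos.mp (show 0 < H.card by omega)
    exact ⟨{e}, Finset.singleton_subset_iff.mpr he, Finset.card_singleton e, by
      rw [Finset.coe_singleton]; exact Set.pairwise_singleton _ _⟩
  | succ k IH =>
    intro hN H hHE hcard
    have hNw : s^2 * (k+1) ≤ N := le_trans (Nat.mul_le_mul_left _ (Nat.le_succ _)) hN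
    set c := (r-1).choose (s-1) * N ^ (s-1) with hc
    set C2 := (r-2).choose (s-2) * N ^ (s-2) with hC2
    set B := s * (k+1) * C2 with hB
    have hCle : (r-2).choose (s-2) * N ≤ (r-1).choose (s-1) * N := by
      apply Nat.mul_le_mul_right
      have h1 : r - 1 = (r-2) + 1 := by omega
      have h2 : s - 1 = (s-2) + 1 := by omega
      rw [h1, h2, Nat.choose_succ_succ]
      omega
    have hC2c : N * C2 ≤ c := by
      rw [hc, hC2]
      have h2 : s - 1 = (s-2) + 1 := by omega
      calc N * ((r-2).choose (s-2) * N ^ (s-2))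
          = ((r-2).choose (s-2) * N) * N ^ (s-2) := by ring
        _ ≤ ((r-1).choose (s-1) * N) * N ^ (s-2) := Nat.mul_le_mul_right _ hCle
        _ = (r-1).choose (s-1) * N ^ (s-1) := by rw [h2, pow_succ]; ring
    by_cases hbig : ∃ v : (i : Fin r) × Fin N, B < (H.filter fun e => v ∈ e).card
    · obtain ⟨v, hv⟩ := hbig
      set H' := H.filter (fun e => v ∉ e) with hH'
      have hsplit : H'.card + (H.filter fun e => v ∈ e).card = H.card := by
        rw [hH', Nat.add_comm]
        exact Finset.card_filter_add_card_filter_not _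
      have hdegle : (H.filter fun e => v ∈ e).card ≤ c := by
        rw [hc, ← deg_eq r s N (by omega) v]
        exact Finset.card_le_card (Finset.filter_subset_filter _ hHE)
      have hH'E : H' ⊆ crossEdges r s (fun _ => N) :=
        subset_trans (Finset.filter_subset _ _) hHE
      have hH'card : k * c < H'.card := by
        have hstep : k * c + c < H'.card + c := by
          calc k * c + c = (k+1) * c := by ring
            _ < H.card := hcard
            _ ≤ H'.card + c := by omega
        exact Nat.lt_of_add_lt_add_right hstep
      obtain ⟨M, hMH', hMcard, hMdisj⟩ := IH hNw H' hH'E hH'card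
      set W := M.biUnion id with hW
      have hWcard : W.card ≤ s * (k+1) := by
        calc W.card ≤ ∑ f ∈ M, (id f).card := Finset.card_biUnion_le
          _ = ∑ f ∈ M, s := Finset.sum_congr rfl fun f hf =>
              edge_card_s8 hH'E (hMH' hf)
          _ = (k+1) * s := by rw [Finset.sum_const, hMcard, smul_eq_mul]
          _ = s * (k+1) := Nat.mul_comm _ _
      have hvW : v ∉ W := by
        intro hmem
        obtain ⟨f, hf, hvf⟩ := Finset.mem_biUnion.mp hmem
        exact (Finset.mem_filter.mp (hMH' hf)).2 hvf
      have hexists : ∃ e ∈ H, v ∈ e ∧ ∀ w ∈ W, w ∉ e := by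
        by_contra hcon
        push_neg at hcon
        have hsub : H.filter (fun e => v ∈ e) ⊆
            W.biUnion fun w => (crossEdges r s fun _ => N).filter fun e => v ∈ e ∧ w ∈ e := by
          intro e he
          rw [Finset.mem_filter] at he
          obtain ⟨w, hw, hwe⟩ := hcon e he.1 he.2
          exact Finset.mem_biUnion.mpr ⟨w, hw, Finset.mem_filter.mpr ⟨hHE he.1, he.2, hwe⟩⟩
        have : (H.filter fun e => v ∈ e).card ≤ B := by
          calc (H.filter fun e => v ∈ e).card
              ≤ ∑ w ∈ W, ((crossEdges r s fun _ => N).filter fun e => v ∈ e ∧ w ∈ e).card :=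
                le_trans (Finset.card_le_card hsub) Finset.card_biUnion_le
            _ ≤ ∑ w ∈ W, C2 := Finset.sum_le_sum fun w hw =>
                pair_le r s N hs v w (fun h => hvW (h ▸ hw))
            _ = W.card * C2 := by rw [Finset.sum_const, smul_eq_mul]
            _ ≤ s * (k+1) * C2 := Nat.mul_le_mul_right _ hWcard
        omega
      obtain ⟨e, heH, hve, heW⟩ := hexists
      have heM : e ∉ M := fun h => (Finset.mem_filter.mp (hMH' h)).2 hve
      refine ⟨insert e M, ?_, ?_, ?_⟩
      · exact Finset.insert_subset heH (subset_trans hMH' (Finset.filter_subset _ _))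
      · rw [Finset.card_insert_of_notMem heM, hMcard]
      · rw [Finset.coe_insert]
        refine Set.Pairwise.insert hMdisj ?_
        intro f hf _
        have hdisj : Disjoint e f := by
          rw [Finset.disjoint_left]
          intro x hx hxf
          exact heW x (Finset.mem_biUnion.mpr ⟨f, hf, hxf⟩) hx
        exact ⟨hdisj, hdisj.symm⟩
    · push_neg at hbig
      set MM := H.powerset.filter
        (fun A : Finset (Finset ((i : Fin r) × Fin N)) =>
          (↑A : Set (Finset ((i : Fin r) × Fin N))).Pairwise Disjoint) with hMM
      have hne : MM.Nonempty := ⟨∅, Finset.mem_filter.mpr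
        ⟨Finset.mem_powerset.mpr (Finset.empty_subset _), by simp⟩⟩
      obtain ⟨M, hMmem, hMmax⟩ := MM.exists_max_image Finset.card hne
      rw [hMM, Finset.mem_filter, Finset.mem_powerset] at hMmem
      obtain ⟨hMH, hMdisj⟩ := hMmem
      by_cases hMcard : k + 2 ≤ M.card
      · obtain ⟨t, htM, htcard⟩ := Finset.exists_subset_card_eq hMcard
        exact ⟨t, subset_trans htM hMH, htcard,
          Set.Pairwise.mono (Finset.coe_subset.mpr htM) hMdisj⟩
      · exfalso
        push_neg at hMcard
        have hMcard' : M.card ≤ k + 1 := by omega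
        set W := M.biUnion id with hW
        have hWcard : W.card ≤ s * (k+1) := by
          calc W.card ≤ ∑ f ∈ M, (id f).card := Finset.card_biUnion_le
            _ = ∑ f ∈ M, s := Finset.sum_congr rfl fun f hf => edge_card_s8 hHE (hMH hf)
            _ = M.card * s := by rw [Finset.sum_const, smul_eq_mul]
            _ ≤ (k+1) * s := Nat.mul_le_mul_right _ hMcard'
            _ = s * (k+1) := Nat.mul_comm _ _
        have hmeet : ∀ e ∈ H, ∃ w ∈ W, w ∈ e := by
          intro e he
          by_contra hcon
          push_neg at hcon
          have heM : e ∉ M := by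
            intro h
            have : e.card = s := edge_card_s8 hHE he
            obtain ⟨x, hx⟩ := Finset.card_pos.mp (by omega : 0 < e.card)
            exact hcon x (Finset.mem_biUnion.mpr ⟨e, h, hx⟩) hx
          have hdisj : ∀ f ∈ M, Disjoint e f := by
            intro f hf
            rw [Finset.disjoint_left]
            intro x hx hxf
            exact hcon x (Finset.mem_biUnion.mpr ⟨f, hf, hxf⟩) hx
          have hmem' : insert e M ∈ MM := by
            rw [hMM, Finset.mem_filter, Finset.mem_powerset]
            refine ⟨Finset.insert_subset he hMH, ?_⟩
            rw [Finset.coe_insert]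
            exact Set.Pairwise.insert hMdisj
              (fun f hf _ => ⟨hdisj f hf, (hdisj f hf).symm⟩)
          have := hMmax _ hmem'
          rw [Finset.card_insert_of_notMem heM] at this
          omega
        have hcover : H ⊆ W.biUnion fun w => H.filter fun e => w ∈ e := by
          intro e he
          obtain ⟨w, hw, hwe⟩ := hmeet e he
          exact Finset.mem_biUnion.mpr ⟨w, hw, Finset.mem_filter.mpr ⟨he, hwe⟩⟩
        have hfinal : H.card ≤ (k+1) * c := by
          calc H.card ≤ ∑ w ∈ W, (H.filter fun e => w ∈ e).card :=
              le_trans (Finset.card_le_card hcover) Finset.card_biUnion_le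
            _ ≤ ∑ w ∈ W, B := Finset.sum_le_sum fun w _ => hbig w
            _ = W.card * B := by rw [Finset.sum_const, smul_eq_mul]
            _ ≤ (s * (k+1)) * B := Nat.mul_le_mul_right _ hWcard
            _ = (k+1) * ((s^2 * (k+1)) * C2) := by rw [hB]; ring
            _ ≤ (k+1) * (N * C2) := Nat.mul_le_mul_left _
                (Nat.mul_le_mul_right _ hNw)
            _ ≤ (k+1) * c := Nat.mul_le_mul_left _ hC2c
        omega

lemma filter_val_lt_card (N t : ℕ) (h : t ≤ N) :
    ((univ : Finset (Fin N)).filter fun a => a.val < t).card = t := by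
  have key : ((univ : Finset (Fin N)).filter fun a => a.val < t).card
      = (Finset.range t).card := by
    apply Finset.card_bij (fun a _ => a.val)
    · intro a ha; exact Finset.mem_range.mpr (Finset.mem_filter.mp ha).2
    · intro a _ b _ hab; exact Fin.val_injective hab
    · intro j hj
      exact ⟨⟨j, lt_of_lt_of_le (Finset.mem_range.mp hj) h⟩,
        Finset.mem_filter.mpr ⟨Finset.mem_univ _, Finset.mem_range.mp hj⟩, rfl⟩
  rw [key, Finset.card_range]

theorem stmt8 (r s k N : ℕ) (hs : 3 ≤ s) (hsr : s ≤ r - 1) (hk : 1 ≤ k)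
    (h1 : s ≤ r - 2 → s ^ 3 * k + s * r ≤ N)
    (h2 : s = r - 1 → s ^ 3 * k ^ 2 + s * r ≤ N) :
    IsGreatest {m : ℕ | ∃ H ⊆ crossEdges r s (fun _ => N), ¬ hasMatching H k ∧ H.card = m}
      ((k - 1) * Nat.choose (r - 1) (s - 1) * N ^ (s - 1)) := by
  classical
  have hr4 : 4 ≤ r := by omega
  have hN : s ^ 2 * k ≤ N := by
    have hcases : s ≤ r - 2 ∨ s = r - 1 := by omega
    rcases hcases with h | h
    · have hA := h1 h
      have hB : s ^ 2 * k ≤ s ^ 3 * k :=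
        Nat.mul_le_mul_right k (Nat.pow_le_pow_right (by omega) (by omega))
      omega
    · have hA := h2 h
      have hB : s ^ 2 * k ≤ s ^ 3 * k ^ 2 :=
        Nat.mul_le_mul (Nat.pow_le_pow_right (by omega) (by omega))
          (Nat.le_self_pow (by omega) k)
      omega
  have hN0 : 0 < N := by
    have : 0 < s ^ 2 * k := Nat.mul_pos (pow_pos (by omega : 0 < s) 2) hk
    omega
  have hkN : k - 1 ≤ N := by
    have : k ≤ s ^ 2 * k := Nat.le_mul_of_pos_left k (pow_pos (by omega : 0 < s) 2)
    omega
  set c := (r-1).choose (s-1) * N ^ (s-1) with hc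
  set p0 : Fin r := ⟨0, by omega⟩ with hp0
  set A0 := (univ : Finset (Fin N)).filter (fun a => a.val < k - 1) with hA0
  set H₀ := A0.biUnion
    (fun a => (crossEdges r s fun _ => N).filter
      (fun e => (⟨p0, a⟩ : (i : Fin r) × Fin N) ∈ e)) with hH₀
  have hA0card : A0.card = k - 1 := filter_val_lt_card N (k-1) hkN
  have hH₀sub : H₀ ⊆ crossEdges r s (fun _ => N) := by
    rw [hH₀]
    exact Finset.biUnion_subset.mpr fun a _ => Finset.filter_subset _ _
  constructor
  · -- membership: the construction
    refine ⟨H₀, hH₀sub, ?_, ?_⟩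
    · -- no matching of size k
      rintro ⟨M, hMH, hMcard, hMdisj⟩
      have hmapsto : ∀ e ∈ M, (fun e : Finset ((i : Fin r) × Fin N) =>
          if h : ∃ a, a ∈ A0 ∧ (⟨p0, a⟩ : (i : Fin r) × Fin N) ∈ e
          then h.choose else ⟨0, hN0⟩) e ∈ A0 := by
        intro e he
        have := hMH he
        rw [hH₀] at this
        obtain ⟨a, ha, hae⟩ := Finset.mem_biUnion.mp this
        have hex : ∃ a, a ∈ A0 ∧ (⟨p0, a⟩ : (i : Fin r) × Fin N) ∈ e :=
          ⟨a, ha, (Finset.mem_filter.mp hae).2⟩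
        simp only [dif_pos hex]
        exact hex.choose_spec.1
      have hlt : A0.card < M.card := by rw [hA0card, hMcard]; omega
      obtain ⟨e1, he1, e2, he2, hne, hfe⟩ :=
        Finset.exists_ne_map_eq_of_card_lt_of_maps_to hlt hmapsto
      have hd : Disjoint e1 e2 := hMdisj he1 he2 hne
      -- both contain the same special vertex
      have h1' := hMH he1; have h2' := hMH he2
      rw [hH₀] at h1' h2'
      obtain ⟨a1, ha1, hae1⟩ := Finset.mem_biUnion.mp h1'
      have hex1 : ∃ a, a ∈ A0 ∧ (⟨p0, a⟩ : (i : Fin r) × Fin N) ∈ e1 :=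
        ⟨a1, ha1, (Finset.mem_filter.mp hae1).2⟩
      obtain ⟨a2, ha2, hae2⟩ := Finset.mem_biUnion.mp h2'
      have hex2 : ∃ a, a ∈ A0 ∧ (⟨p0, a⟩ : (i : Fin r) × Fin N) ∈ e2 :=
        ⟨a2, ha2, (Finset.mem_filter.mp hae2).2⟩
      simp only [dif_pos hex1, dif_pos hex2] at hfe
      have hm1 : (⟨p0, hex1.choose⟩ : (i : Fin r) × Fin N) ∈ e1 := hex1.choose_spec.2
      have hm2 : (⟨p0, hex1.choose⟩ : (i : Fin r) × Fin N) ∈ e2 := by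
        rw [hfe]; exact hex2.choose_spec.2
      exact Finset.disjoint_left.mp hd hm1 hm2
    · -- cardinality
      rw [hH₀, Finset.card_biUnion, Finset.sum_congr rfl
        (fun a _ => deg_eq r s N (by omega) ⟨p0, a⟩),
        Finset.sum_const, hA0card, smul_eq_mul, mul_assoc]
      intro a _ b _ hab
      simp only [Function.onFun]
      rw [Finset.disjoint_left]
      intro e he1 he2
      have hc := (Finset.mem_filter.mp he1).1
      have hm1 := (Finset.mem_filter.mp he1).2
      have hm2 := (Finset.mem_filter.mp he2).2
      have := crossEdges_injOn_fst hc _ hm1 _ hm2 rfl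
      exact hab (eq_of_heq (Sigma.mk.inj_iff.mp this).2)
  · -- upper bound
    rintro m ⟨H, hHE, hnom, rfl⟩
    by_contra hcon
    push_neg at hcon
    apply hnom
    have hk1 : k - 1 + 1 = k := by omega
    have := matching_of_large r s N (by omega) (by omega) (k-1)
      (by rw [hk1]; exact hN) H hHE
      (by rw [mul_assoc] at hcon; exact hcon)
    rwa [hk1] at this
end

section
/- Let G be an r-partite graph (r ≥ 2) on parts of any sizes in which every vertex has degree at most 2k−2. If G has a matching M of size k−1 that is maximum (G has no matching of size k), and B = V(G) ∖ V(M), then for each edge {u_i, v_i} ∈ M the number of edges between {u_i, v_i} and B is at most 2k−2, and consequently the total number of edges of G is at most 3(k−1)². -/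
set_option linter.unusedSectionVars false
set_option maxHeartbeats 800000

section aux
variable {α : Type*} [DecidableEq α] [Fintype α]

lemma my_mem_V {M : Finset (Finset α)} {m : Finset α} (hm : m ∈ M) {x : α} (hx : x ∈ m) :
    x ∈ M.biUnion id := Finset.mem_biUnion.mpr ⟨m, hm, hx⟩

/-- Augmentation: two edges from a matching edge `e = {u,v}` to two distinct
uncovered vertices give a larger matching, contradiction. -/
lemma my_aug {k : ℕ} {G M : Finset (Finset α)} (hMG : M ⊆ G)
    (hMcard : M.card = k - 1)
    (hMdisj : (M : Set (Finset α)).Pairwise Disjoint)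
    (hmax : ¬ hasMatching G k)
    {e : Finset α} (he : e ∈ M) {u v b1 b2 : α} (hu : u ∈ e) (hv : v ∈ e)
    (huv : u ≠ v) (hb1 : b1 ∉ M.biUnion id) (hb2 : b2 ∉ M.biUnion id)
    (hb12 : b1 ≠ b2) (hf1 : ({u, b1} : Finset α) ∈ G) (hf2 : ({v, b2} : Finset α) ∈ G) :
    False := by
  have huV : u ∈ M.biUnion id := my_mem_V he hu
  have hvV : v ∈ M.biUnion id := my_mem_V he hv
  have hub2 : u ≠ b2 := fun h => hb2 (h ▸ huV)
  have hvb1 : v ≠ b1 := fun h => hb1 (h ▸ hvV)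
  have hd12 : Disjoint ({u, b1} : Finset α) ({v, b2} : Finset α) := by
    rw [Finset.disjoint_left]
    intro x hx hx'
    rcases Finset.mem_insert.mp hx with rfl | hx1
    · rcases Finset.mem_insert.mp hx' with h | h
      · exact huv h
      · exact hub2 (Finset.mem_singleton.mp h)
    · have : x = b1 := Finset.mem_singleton.mp hx1
      subst this
      rcases Finset.mem_insert.mp hx' with h | h
      · exact hvb1 h.symm
      · exact hb12 (Finset.mem_singleton.mp h)
  have hd1 : ∀ m ∈ M, m ≠ e → Disjoint ({u, b1} : Finset α) m := by
    intro m hm hme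
    rw [Finset.disjoint_left]
    intro x hx hxm
    rcases Finset.mem_insert.mp hx with rfl | hx1
    · exact Finset.disjoint_left.mp (hMdisj he hm (Ne.symm hme)) hu hxm
    · exact hb1 ((Finset.mem_singleton.mp hx1) ▸ my_mem_V hm hxm)
  have hd2 : ∀ m ∈ M, m ≠ e → Disjoint ({v, b2} : Finset α) m := by
    intro m hm hme
    rw [Finset.disjoint_left]
    intro x hx hxm
    rcases Finset.mem_insert.mp hx with rfl | hx1
    · exact Finset.disjoint_left.mp (hMdisj he hm (Ne.symm hme)) hv hxm
    · exact hb2 ((Finset.mem_singleton.mp hx1) ▸ my_mem_V hm hxm)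
  have hf1ne2 : ({u, b1} : Finset α) ≠ ({v, b2} : Finset α) := by
    intro h
    have : u ∈ ({v, b2} : Finset α) := h ▸ Finset.mem_insert_self u {b1}
    rcases Finset.mem_insert.mp this with h' | h'
    · exact huv h'
    · exact hub2 (Finset.mem_singleton.mp h')
  have hnotinM1 : ({u, b1} : Finset α) ∉ M := fun h =>
    hb1 (my_mem_V h (Finset.mem_insert_of_mem (Finset.mem_singleton_self b1)))
  have hnotinM2 : ({v, b2} : Finset α) ∉ M := fun h =>
    hb2 (my_mem_V h (Finset.mem_insert_of_mem (Finset.mem_singleton_self b2)))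
  have hM1 : 1 ≤ M.card := Finset.card_pos.mpr ⟨e, he⟩
  apply hmax
  refine ⟨insert {u, b1} (insert {v, b2} (M.erase e)), ?_, ?_, ?_⟩
  · intro f hf
    rcases Finset.mem_insert.mp hf with rfl | hf
    · exact hf1
    rcases Finset.mem_insert.mp hf with rfl | hf
    · exact hf2
    · exact hMG (Finset.mem_of_mem_erase hf)
  · have h2e : ({v, b2} : Finset α) ∉ M.erase e := fun h => hnotinM2 (Finset.mem_of_mem_erase h)
    have h1e : ({u, b1} : Finset α) ∉ insert ({v, b2} : Finset α) (M.erase e) := by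
      intro h
      rcases Finset.mem_insert.mp h with h | h
      · exact hf1ne2 h
      · exact hnotinM1 (Finset.mem_of_mem_erase h)
    rw [Finset.card_insert_of_notMem h1e, Finset.card_insert_of_notMem h2e,
      Finset.card_erase_of_mem he, hMcard]
    omega
  · intro a ha b hb hab
    simp only [Finset.coe_insert, Set.mem_insert_iff, Finset.mem_coe, Finset.mem_erase] at ha hb
    rcases ha with rfl | rfl | ⟨hane, haM⟩
    · rcases hb with rfl | rfl | ⟨hbne, hbM⟩
      · exact absurd rfl hab
      · exact hd12
      · exact hd1 b hbM hbne
    · rcases hb with rfl | rfl | ⟨hbne, hbM⟩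
      · exact hd12.symm
      · exact absurd rfl hab
      · exact hd2 b hbM hbne
    · rcases hb with rfl | rfl | ⟨hbne, hbM⟩
      · exact (hd1 a haM hane).symm
      · exact (hd2 a haM hane).symm
      · exact hMdisj haM hbM hab

/-- Independence of B: every edge of G meets V(M). -/
lemma my_indep {k : ℕ} {G M : Finset (Finset α)} (hMG : M ⊆ G)
    (hMcard : M.card = k - 1) (hk : 1 ≤ k)
    (hcard2 : ∀ f ∈ G, f.card = 2)
    (hMdisj : (M : Set (Finset α)).Pairwise Disjoint)
    (hmax : ¬ hasMatching G k)
    {f : Finset α} (hf : f ∈ G) : (f ∩ M.biUnion id).Nonempty := by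
  by_contra hB
  rw [Finset.not_nonempty_iff_eq_empty, ← Finset.disjoint_iff_inter_eq_empty] at hB
  have hfM : f ∉ M := by
    intro hfM
    have : f ⊆ M.biUnion id := fun x hx => my_mem_V hfM hx
    have hne : f.Nonempty := Finset.card_pos.mp (by rw [hcard2 f hf]; norm_num)
    obtain ⟨x, hx⟩ := hne
    exact Finset.disjoint_left.mp hB hx (this hx)
  apply hmax
  refine ⟨insert f M, ?_, ?_, ?_⟩
  · intro g hg
    rcases Finset.mem_insert.mp hg with rfl | hg
    · exact hf
    · exact hMG hg
  · rw [Finset.card_insert_of_notMem hfM, hMcard]; omega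
  · intro a ha b hb hab
    simp only [Finset.coe_insert, Set.mem_insert_iff, Finset.mem_coe] at ha hb
    have hdf : ∀ m ∈ M, Disjoint f m := by
      intro m hm
      rw [Finset.disjoint_left]
      intro x hx hxm
      exact Finset.disjoint_left.mp hB hx (my_mem_V hm hxm)
    rcases ha with rfl | haM
    · rcases hb with rfl | hbM
      · exact absurd rfl hab
      · exact hdf b hbM
    · rcases hb with rfl | hbM
      · exact (hdf a haM).symm
      · exact hMdisj haM hbM hab

/-- Structure of an edge meeting both `e` and `B`. -/
lemma my_struct {G M : Finset (Finset α)} (hcard2 : ∀ f ∈ G, f.card = 2)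
    {e : Finset α} (he : e ∈ M) {f : Finset α} (hf : f ∈ G)
    (h1 : (f ∩ e).Nonempty) (h2 : (f ∩ (Finset.univ \ M.biUnion id)).Nonempty) :
    ∃ x b, x ∈ e ∧ b ∉ M.biUnion id ∧ x ∈ f ∧ b ∈ f ∧ f = {x, b} := by
  obtain ⟨x, hx⟩ := h1
  obtain ⟨b, hb⟩ := h2
  rw [Finset.mem_inter] at hx hb
  rw [Finset.mem_sdiff] at hb
  have hxV : x ∈ M.biUnion id := my_mem_V he hx.2
  have hxb : x ≠ b := fun h => hb.2.2 (h ▸ hxV)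
  have hsub : ({x, b} : Finset α) ⊆ f := by
    intro y hy
    rcases Finset.mem_insert.mp hy with rfl | hy
    · exact hx.1
    · exact (Finset.mem_singleton.mp hy) ▸ hb.1
  have hcard : f.card ≤ ({x, b} : Finset α).card := by
    rw [Finset.card_pair hxb, hcard2 f hf]
  exact ⟨x, b, hx.2, hb.2.2, hx.1, hb.1, (Finset.eq_of_subset_of_card_le hsub hcard).symm⟩

lemma my_part1 {k : ℕ} {G M : Finset (Finset α)}
    (hcard2 : ∀ f ∈ G, f.card = 2)
    (hdeg : ∀ v : α, (G.filter fun e => v ∈ e).card ≤ 2 * k - 2)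
    (hMG : M ⊆ G) (hMcard : M.card = k - 1)
    (hMdisj : (M : Set (Finset α)).Pairwise Disjoint)
    (hmax : ¬ hasMatching G k)
    {e : Finset α} (he : e ∈ M) :
    (G.filter fun f => (f ∩ e).Nonempty ∧
        (f ∩ (Finset.univ \ M.biUnion id)).Nonempty).card ≤ 2 * k - 2 := by
  set F := G.filter fun f => (f ∩ e).Nonempty ∧
      (f ∩ (Finset.univ \ M.biUnion id)).Nonempty with hF
  have hk2 : 2 ≤ k := by
    have : 1 ≤ M.card := Finset.card_pos.mpr ⟨e, he⟩
    omega
  obtain ⟨u, v, huv, hevu⟩ := Finset.card_eq_two.mp (hcard2 e (hMG he))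
  have hu : u ∈ e := hevu ▸ Finset.mem_insert_self u {v}
  have hv : v ∈ e := hevu ▸ Finset.mem_insert_of_mem (Finset.mem_singleton_self v)
  -- helper : bound via degree of a single vertex
  have hvert : ∀ w : α, (∀ f ∈ F, w ∈ f) → F.card ≤ 2 * k - 2 := by
    intro w hw
    refine le_trans (Finset.card_le_card ?_) (hdeg w)
    intro f hf
    exact Finset.mem_filter.mpr ⟨(Finset.mem_filter.mp hf).1, hw f hf⟩
  by_cases hcu : ∀ f ∈ F, u ∈ f
  · exact hvert u hcu
  by_cases hcv : ∀ f ∈ F, v ∈ f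
  · exact hvert v hcv
  push_neg at hcu hcv
  obtain ⟨f2, hf2F, hf2u⟩ := hcu
  obtain ⟨f1, hf1F, hf1v⟩ := hcv
  obtain ⟨hf2G, hf2e, hf2B⟩ := Finset.mem_filter.mp hf2F
  obtain ⟨hf1G, hf1e, hf1B⟩ := Finset.mem_filter.mp hf1F
  obtain ⟨x2, b2, hx2e, hb2, hx2f, hb2f, hf2eq⟩ := my_struct hcard2 he hf2G hf2e hf2B
  obtain ⟨x1, b1, hx1e, hb1, hx1f, hb1f, hf1eq⟩ := my_struct hcard2 he hf1G hf1e hf1B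
  -- x2 ≠ u so x2 = v ; x1 ≠ v so x1 = u
  have hx2v : v = x2 := by
    symm
    have := hevu ▸ hx2e
    rcases Finset.mem_insert.mp this with h | h
    · exact absurd (h ▸ hx2f) hf2u
    · exact Finset.mem_singleton.mp h
  have hx1u : u = x1 := by
    symm
    have := hevu ▸ hx1e
    rcases Finset.mem_insert.mp this with h | h
    · exact h
    · exact absurd ((Finset.mem_singleton.mp h) ▸ hx1f) hf1v
  subst hx2v hx1u
  rw [hf2eq] at hf2G
  rw [hf1eq] at hf1G
  -- now every edge of F is f1 or f2
  have hFsub : F ⊆ {({u, b1} : Finset α), ({v, b2} : Finset α)} := by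
    intro f hfF
    obtain ⟨hfG, hfe, hfB⟩ := Finset.mem_filter.mp hfF
    obtain ⟨x, b, hxe, hb, hxf, hbf, hfeq⟩ := my_struct hcard2 he hfG hfe hfB
    rw [hfeq] at hfG ⊢
    have hxuv := hevu ▸ hxe
    rcases Finset.mem_insert.mp hxuv with rfl | h
    · -- x = u : must have b = b2, else augment with f2 = {v,b2}
      by_cases hbb2 : b = b2
      · subst hbb2
        -- then also b1 = b (else augment f1={u,b1} with f2={v,b}), giving f = f1
        by_cases hb1b : b1 = b
        · subst hb1b; exact Finset.mem_insert_self _ _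
        · exact absurd (my_aug hMG hMcard hMdisj hmax he hu hv huv hb1 hb hb1b hf1G hf2G) id
      · exact absurd (my_aug hMG hMcard hMdisj hmax he hu hv huv hb hb2 hbb2 hfG hf2G) id
    · have hxv : v = x := (Finset.mem_singleton.mp h).symm
      subst hxv
      by_cases hbb1 : b1 = b
      · subst hbb1
        -- f = {v, b1}; need = f2, i.e. b1 = b2
        by_cases hb1b2 : b1 = b2
        · subst hb1b2; exact Finset.mem_insert_of_mem (Finset.mem_singleton_self _)
        · exact absurd (my_aug hMG hMcard hMdisj hmax he hu hv huv hb1 hb2 hb1b2 hf1G hf2G) id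
      · exact absurd (my_aug hMG hMcard hMdisj hmax he hu hv huv hb1 hb (hbb1) hf1G hfG) id
  calc F.card ≤ ({({u, b1} : Finset α), ({v, b2} : Finset α)} : Finset (Finset α)).card :=
        Finset.card_le_card hFsub
    _ ≤ 2 := Finset.card_insert_le _ _ |>.trans (by simp)
    _ ≤ 2 * k - 2 := by omega

lemma my_part2 {k : ℕ} {G M : Finset (Finset α)}
    (hcard2 : ∀ f ∈ G, f.card = 2)
    (hdeg : ∀ v : α, (G.filter fun e => v ∈ e).card ≤ 2 * k - 2)
    (hMG : M ⊆ G) (hMcard : M.card = k - 1) (hk : 1 ≤ k)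
    (hMdisj : (M : Set (Finset α)).Pairwise Disjoint)
    (hmax : ¬ hasMatching G k) :
    G.card ≤ 3 * (k - 1) ^ 2 := by
  set V : Finset α := M.biUnion id with hV
  set B : Finset α := Finset.univ \ V with hB
  -- V has at most 2(k-1) vertices
  have hVcard : V.card ≤ 2 * (k - 1) := by
    calc V.card ≤ ∑ e ∈ M, (id e).card := Finset.card_biUnion_le
      _ = ∑ e ∈ M, 2 := by
          apply Finset.sum_congr rfl
          intro e he; exact hcard2 e (hMG he)
      _ = 2 * (k - 1) := by rw [Finset.sum_const, hMcard]; ring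
  -- double counting: sum of |f ∩ V| over G
  have hsumV : ∑ f ∈ G, (f ∩ V).card ≤ 2 * (k - 1) * (2 * k - 2) := by
    have hswap : ∑ f ∈ G, (f ∩ V).card
        = ∑ x ∈ V, (G.filter fun f => x ∈ f).card := by
      have h1 : ∀ f : Finset α, (f ∩ V).card = ∑ x ∈ V, if x ∈ f then 1 else 0 := by
        intro f
        rw [← Finset.card_filter]
        congr 1
        ext x
        simp [Finset.mem_inter, and_comm]
      calc ∑ f ∈ G, (f ∩ V).card = ∑ f ∈ G, ∑ x ∈ V, if x ∈ f then 1 else 0 :=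
            Finset.sum_congr rfl (fun f _ => h1 f)
        _ = ∑ x ∈ V, ∑ f ∈ G, if x ∈ f then 1 else 0 := Finset.sum_comm
        _ = ∑ x ∈ V, (G.filter fun f => x ∈ f).card := by
            apply Finset.sum_congr rfl
            intro x _
            rw [Finset.card_filter]
    rw [hswap]
    calc ∑ x ∈ V, (G.filter fun f => x ∈ f).card ≤ ∑ x ∈ V, (2 * k - 2) :=
          Finset.sum_le_sum (fun x _ => hdeg x)
      _ = V.card * (2 * k - 2) := by rw [Finset.sum_const]; ring
      _ ≤ 2 * (k - 1) * (2 * k - 2) := Nat.mul_le_mul_right _ hVcard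
  -- edges meeting B
  have hEB : (G.filter fun f => (f ∩ B).Nonempty).card ≤ (k - 1) * (2 * k - 2) := by
    have hbi : (G.filter fun f => (f ∩ B).Nonempty)
        = M.biUnion (fun e => G.filter fun f => (f ∩ e).Nonempty ∧ (f ∩ B).Nonempty) := by
      ext f
      simp only [Finset.mem_filter, Finset.mem_biUnion]
      constructor
      · rintro ⟨hfG, hfB⟩
        obtain ⟨x, hx⟩ := my_indep hMG hMcard hk hcard2 hMdisj hmax hfG
        rw [Finset.mem_inter] at hx
        obtain ⟨e, he, hxe⟩ := Finset.mem_biUnion.mp hx.2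
        exact ⟨e, he, hfG, ⟨x, Finset.mem_inter.mpr ⟨hx.1, hxe⟩⟩, hfB⟩
      · rintro ⟨e, _, hfG, _, hfB⟩
        exact ⟨hfG, hfB⟩
    rw [hbi, Finset.card_biUnion]
    · calc ∑ e ∈ M, (G.filter fun f => (f ∩ e).Nonempty ∧ (f ∩ B).Nonempty).card
          ≤ ∑ e ∈ M, (2 * k - 2) := Finset.sum_le_sum
            (fun e he => my_part1 hcard2 hdeg hMG hMcard hMdisj hmax he)
        _ = (k - 1) * (2 * k - 2) := by rw [Finset.sum_const, hMcard]; ring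
    · intro e he e' he' hee
      rw [Function.onFun, Finset.disjoint_left]
      intro f hf hf'
      obtain ⟨hfG, ⟨x, hx⟩, ⟨b, hb⟩⟩ := Finset.mem_filter.mp hf
      obtain ⟨_, ⟨y, hy⟩, _⟩ := Finset.mem_filter.mp hf'
      rw [Finset.mem_inter] at hx hy hb
      rw [hB, Finset.mem_sdiff] at hb
      have hbx : b ≠ x := fun h => hb.2.2 (h ▸ my_mem_V he hx.2)
      have hby : b ≠ y := fun h => hb.2.2 (h ▸ my_mem_V he' hy.2)
      have hxy : x = y := by
        by_contra hxy
        have hsub : ({b, x, y} : Finset α) ⊆ f := by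
          intro z hz
          rcases Finset.mem_insert.mp hz with rfl | hz
          · exact hb.1
          rcases Finset.mem_insert.mp hz with rfl | hz
          · exact hx.1
          · exact (Finset.mem_singleton.mp hz) ▸ hy.1
        have h3 : ({b, x, y} : Finset α).card = 3 := by
          rw [Finset.card_insert_of_notMem (by simp [hbx, hby]), Finset.card_pair hxy]
        have := Finset.card_le_card hsub
        rw [h3, hcard2 f hfG] at this
        omega
      subst hxy
      exact Finset.disjoint_left.mp (hMdisj he he' hee) hx.2 hy.2
  -- each edge splits as |f∩V| + |f∩B| = 2, with |f∩B| ≤ 1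
  have hsplit : ∀ f ∈ G, (f ∩ V).card + (f ∩ B).card = 2 := by
    intro f hf
    have h1 : f ∩ B = f \ V := by
      ext x; simp [hB, Finset.mem_sdiff]
    rw [h1, Finset.card_inter_add_card_sdiff, hcard2 f hf]
  have hsumB : ∑ f ∈ G, (f ∩ B).card ≤ (G.filter fun f => (f ∩ B).Nonempty).card := by
    rw [Finset.card_filter]
    apply Finset.sum_le_sum
    intro f hf
    split_ifs with h
    · obtain ⟨x, hx⟩ := my_indep hMG hMcard hk hcard2 hMdisj hmax hf
      have := hsplit f hf
      have hVpos : 1 ≤ (f ∩ V).card := Finset.card_pos.mpr ⟨x, hx⟩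
      omega
    · rw [Finset.not_nonempty_iff_eq_empty] at h
      simp [h]
  have htotal : 2 * G.card = ∑ f ∈ G, ((f ∩ V).card + (f ∩ B).card) := by
    rw [Finset.sum_congr rfl hsplit, Finset.sum_const]
    ring
  rw [Finset.sum_add_distrib] at htotal
  have h1 : 2 * G.card ≤ 2 * (k - 1) * (2 * k - 2) + (k - 1) * (2 * k - 2) := by
    omega
  have hkk : 2 * k - 2 = 2 * (k - 1) := by omega
  rw [hkk] at h1
  have : 2 * G.card ≤ 6 * ((k - 1) * (k - 1)) := by
    calc 2 * G.card ≤ 2 * (k-1) * (2 * (k-1)) + (k-1) * (2 * (k-1)) := h1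
      _ = 6 * ((k - 1) * (k - 1)) := by ring
  rw [pow_two]
  omega


theorem stmt13 (r k : ℕ) (hk : 1 ≤ k) (n : Fin r → ℕ)
    (G : Finset (Finset ((i : Fin r) × Fin (n i)))) (hG : G ⊆ crossEdges r 2 n)
    (hdeg : ∀ v : (i : Fin r) × Fin (n i), (G.filter fun e => v ∈ e).card ≤ 2 * k - 2)
    (M : Finset (Finset ((i : Fin r) × Fin (n i)))) (hMG : M ⊆ G)
    (hMcard : M.card = k - 1)
    (hMdisj : (M : Set (Finset ((i : Fin r) × Fin (n i)))).Pairwise Disjoint)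
    (hmax : ¬ hasMatching G k) :
    (∀ e ∈ M, (G.filter fun f => (f ∩ e).Nonempty ∧
        (f ∩ (Finset.univ \ M.biUnion id)).Nonempty).card ≤ 2 * k - 2) ∧
    G.card ≤ 3 * (k - 1) ^ 2 := by
  have hcard2 : ∀ f ∈ G, f.card = 2 := fun f hf => ((Finset.mem_filter.mp (hG hf)).2).1
  exact ⟨fun e he => my_part1 hcard2 hdeg hMG hMcard hMdisj hmax he,
    my_part2 hcard2 hdeg hMG hMcard hk hMdisj hmax⟩

end aux
end

section
/- Let G be an r-partite graph whose matching number is exactly k−1, let X be the set of vertices of degree at least 2k−1 in G. Then |X| ≤ k−1 and the matching number of G − X is at most k−1−|X|. -/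
lemma extend_matching {V : Type*} [DecidableEq V] (k : ℕ)
    (G : Finset (Finset V)) (hcard : ∀ e ∈ G, e.card = 2) (X' : Finset V) :
    (∀ x ∈ X', 2 * k - 1 ≤ (G.filter fun e => x ∈ e).card) →
    ∀ M : Finset (Finset V), M ⊆ G →
    (M : Set (Finset V)).Pairwise Disjoint →
    (∀ e ∈ M, ∀ v ∈ e, v ∉ X') →
    M.card + X'.card ≤ k →
    hasMatching G (M.card + X'.card) := by
  classical
  induction X' using Finset.induction_on with
  | empty =>
    intro _ M hMG hdisj _ _
    exact ⟨M, hMG, by simp, hdisj⟩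
  | @insert x X'' hx ih =>
    intro hdeg M hMG hdisj havoid hle
    have hxdeg : 2 * k - 1 ≤ (G.filter fun e => x ∈ e).card :=
      hdeg x (Finset.mem_insert_self _ _)
    have hX''card : (insert x X'').card = X''.card + 1 :=
      Finset.card_insert_of_notMem hx
    set B : Finset V := M.biUnion id ∪ X'' with hB
    have hBcard : B.card ≤ 2 * M.card + X''.card := by
      have h1 : (M.biUnion id).card ≤ ∑ e ∈ M, (id e).card :=
        Finset.card_biUnion_le
      have h2 : ∑ e ∈ M, (id e).card = 2 * M.card := by
        simp only [id]
        rw [Finset.sum_congr rfl fun e he => hcard e (hMG he),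
          Finset.sum_const, smul_eq_mul, mul_comm]
      calc B.card ≤ (M.biUnion id).card + X''.card := Finset.card_union_le _ _
        _ ≤ 2 * M.card + X''.card := by omega
    have hxB : x ∉ B := by
      simp only [hB, Finset.mem_union, Finset.mem_biUnion, id] at *
      rintro (⟨f, hf, hxf⟩ | hxX'')
      · exact havoid f hf x hxf (Finset.mem_insert_self _ _)
      · exact hx hxX''
    -- bad edges at x
    set S : Finset (Finset V) :=
      (G.filter fun e => x ∈ e).filter (fun e => ¬ Disjoint e B) with hS
    have hScard : S.card ≤ B.card := by
      apply Finset.card_le_card_of_injOn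
        (f := fun e => if h : (e.erase x).Nonempty then h.choose else x)
      · intro e he
        simp only [hS, Finset.mem_coe, Finset.mem_filter] at he
        obtain ⟨⟨heG, hxe⟩, hnd⟩ := he
        have hec : (e.erase x).card = 1 := by
          rw [Finset.card_erase_of_mem hxe, hcard e heG]
        have hne : (e.erase x).Nonempty := Finset.card_pos.mp (by omega)
        simp only [Finset.mem_coe, dif_pos hne]
        obtain ⟨w, hwe, hwB⟩ := Finset.not_disjoint_iff.mp hnd
        have hwex : w ∈ e.erase x := by
          refine Finset.mem_erase.mpr ⟨?_, hwe⟩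
          rintro rfl; exact hxB hwB
        have := Finset.card_le_one.mp (le_of_eq hec) w hwex hne.choose
          hne.choose_spec
        rwa [this] at hwB
      · intro e1 he1 e2 he2 hfe
        simp only [hS, Finset.mem_coe, Finset.mem_filter] at he1 he2
        have hc1 : (e1.erase x).card = 1 := by
          rw [Finset.card_erase_of_mem he1.1.2, hcard e1 he1.1.1]
        have hc2 : (e2.erase x).card = 1 := by
          rw [Finset.card_erase_of_mem he2.1.2, hcard e2 he2.1.1]
        have hne1 : (e1.erase x).Nonempty := Finset.card_pos.mp (by omega)
        have hne2 : (e2.erase x).Nonempty := Finset.card_pos.mp (by omega)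
        simp only [dif_pos hne1, dif_pos hne2] at hfe
        have hs1 : e1.erase x = {hne1.choose} :=
          Finset.eq_singleton_iff_unique_mem.mpr ⟨hne1.choose_spec,
            fun y hy => Finset.card_le_one.mp (le_of_eq hc1) y hy _ hne1.choose_spec⟩
        have hs2 : e2.erase x = {hne2.choose} :=
          Finset.eq_singleton_iff_unique_mem.mpr ⟨hne2.choose_spec,
            fun y hy => Finset.card_le_one.mp (le_of_eq hc2) y hy _ hne2.choose_spec⟩
        have : e1 = insert x (e1.erase x) := (Finset.insert_erase he1.1.2).symm
        rw [this, hs1, hfe, ← hs2, Finset.insert_erase he2.1.2]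
    have hSsub : S ⊆ G.filter fun e => x ∈ e := Finset.filter_subset _ _
    have hlt : S.card < (G.filter fun e => x ∈ e).card := by
      have : M.card + (X''.card + 1) ≤ k := by rw [← hX''card]; exact hle
      omega
    have hex : ∃ e ∈ G.filter (fun e => x ∈ e), e ∉ S := by
      by_contra h
      push_neg at h
      exact absurd (Finset.card_le_card h) (by omega)
    obtain ⟨e, hef, heS⟩ := hex
    rw [Finset.mem_filter] at hef
    obtain ⟨heG, hxe⟩ := hef
    have hed : Disjoint e B := by
      by_contra hnd
      exact heS (by simp only [hS, Finset.mem_filter]; exact ⟨⟨heG, hxe⟩, hnd⟩)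
    have heM : e ∉ M := fun h => havoid e h x hxe (Finset.mem_insert_self _ _)
    have hdisjM : ∀ f ∈ M, Disjoint e f := by
      intro f hf
      exact hed.mono_right ((Finset.subset_biUnion_of_mem id hf).trans
        Finset.subset_union_left)
    have key := ih (fun y hy => hdeg y (Finset.mem_insert_of_mem hy))
      (insert e M)
      (Finset.insert_subset heG hMG)
      (by
        rw [Finset.coe_insert]
        refine Set.pairwise_insert_of_symm |>.mpr
          ⟨hdisj, fun f hf _ => hdisjM f hf⟩)
      (by
        intro f hf v hv hvX
        rcases Finset.mem_insert.mp hf with rfl | hfM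
        · exact (Finset.disjoint_left.mp hed) hv
            (Finset.mem_union_right _ hvX)
        · exact havoid f hfM v hv (Finset.mem_insert_of_mem hvX))
      (by
        rw [Finset.card_insert_of_notMem heM]
        omega)
    rw [Finset.card_insert_of_notMem heM] at key
    have harith : M.card + (insert x X'').card = M.card + 1 + X''.card := by omega
    rw [harith]
    exact key

theorem stmt14 (r k : ℕ) (hk : 1 ≤ k) (n : Fin r → ℕ)
    (G : Finset (Finset ((i : Fin r) × Fin (n i)))) (hG : G ⊆ crossEdges r 2 n)
    (hnu : hasMatching G (k - 1)) (hnu' : ¬ hasMatching G k) :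
    (Finset.univ.filter fun v : (i : Fin r) × Fin (n i) =>
        2 * k - 1 ≤ (G.filter fun e => v ∈ e).card).card ≤ k - 1 ∧
    ¬ hasMatching
        (G.filter fun e => ∀ v ∈ e,
          v ∉ Finset.univ.filter fun v : (i : Fin r) × Fin (n i) =>
            2 * k - 1 ≤ (G.filter fun e' => v ∈ e').card)
        (k - (Finset.univ.filter fun v : (i : Fin r) × Fin (n i) =>
          2 * k - 1 ≤ (G.filter fun e => v ∈ e).card).card) := by
  classical
  set X := Finset.univ.filter fun v : (i : Fin r) × Fin (n i) =>
      2 * k - 1 ≤ (G.filter fun e => v ∈ e).card with hX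
  have hcard : ∀ e ∈ G, e.card = 2 := by
    intro e he
    have h := hG he
    simp only [crossEdges, Finset.mem_filter] at h
    exact h.2.1
  have hdegX : ∀ x ∈ X, 2 * k - 1 ≤ (G.filter fun e => x ∈ e).card := by
    intro x hxX
    simp only [hX, Finset.mem_filter] at hxX
    exact hxX.2
  have h1 : X.card ≤ k - 1 := by
    by_contra h
    push_neg at h
    obtain ⟨X', hX'sub, hX'card⟩ := Finset.exists_subset_card_eq (s := X) (n := k) (by omega)
    have key := extend_matching k G hcard X' (fun x hx => hdegX x (hX'sub hx))
      ∅ (by simp) (by simp) (by simp) (by simp [hX'card])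
    simp only [Finset.card_empty, hX'card, Nat.zero_add] at key
    exact hnu' key
  refine ⟨h1, ?_⟩
  intro hmat
  obtain ⟨M, hMsub, hMcard, hMdisj⟩ := hmat
  have hMG : M ⊆ G := hMsub.trans (Finset.filter_subset _ _)
  have havoid : ∀ e ∈ M, ∀ v ∈ e, v ∉ X := by
    intro e he v hv
    have h := hMsub he
    rw [Finset.mem_filter] at h
    exact h.2 v hv
  have key := extend_matching k G hcard X hdegX M hMG hMdisj havoid (by omega)
  rw [show M.card + X.card = k by omega] at key
  exact hnu' key
end
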